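/- arXiv:2302.10844 — 3 statements merged into one kernel-verified Lean document; each statement's English description precedes it below -/
import Mathlib

section
/- There exist absolute constants c, C > 0 such that the following holds. Let α, ρ, ε > 0 with ε ≤ c·α, let n ≥ C·log(d)/α, let η*_1, …, η*_n be i.i.d. copies of an (α,ρ)-semi-product random vector in ℝ^d, and let μ* ∈ ℝ^d. Then with probability at least 1 − exp(−c·α·n) over the samples, the following event holds: for every ε-corruption y_1, …, y_n of μ* + η*_1, …, μ* + η*_n, every w ∈ W_{2ε}, and every u ∈ ℝ^d with ‖u‖_∞ ≤ ρ, one has L^w(μ* + u) − L^w(μ*) − ⟨∇L^w(μ*), u⟩ ≥ (α/4)·‖u‖², where L^w is the weighted loss for the entry-wise Huber loss F_{2ρ}. -/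
open MeasureTheory ProbabilityTheory Real
open scoped BigOperators ENNReal NNReal Classical

noncomputable section

/-- The clipping map `φ_h`: identity on `[-h, h]`, `h · sign t` outside. -/
def clip (h t : ℝ) : ℝ := if |t| ≤ h then t else h * Real.sign t

/-- The Huber penalty `Φ_h`. -/
def huber (h t : ℝ) : ℝ := if |t| ≤ h then t ^ 2 / 2 else h * |t| - h ^ 2 / 2

/-- Entry-wise Huber loss `F_h`. -/
def huberLoss {d : ℕ} (h : ℝ) (x : EuclideanSpace ℝ (Fin d)) : ℝ :=
  ∑ j, huber h (x j)

/-- Gradient of the entry-wise Huber loss: coordinatewise clipping `f_h`. -/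
def clipVec {d : ℕ} (h : ℝ) (x : EuclideanSpace ℝ (Fin d)) : EuclideanSpace ℝ (Fin d) :=
  WithLp.toLp 2 (fun j => clip h (x j))

/-- Euclidean projection onto the ball of radius `h` centered at `0`. -/
def ballProj {d : ℕ} (h : ℝ) (x : EuclideanSpace ℝ (Fin d)) : EuclideanSpace ℝ (Fin d) :=
  if ‖x‖ ≤ h then x else (h / ‖x‖) • x

/-- `y` is an `ε`-corruption of `ystar`: they differ in at most `ε·n` positions. -/
def IsCorruption {E : Type*} {n : ℕ} (ε : ℝ) (ystar y : Fin n → E) : Prop :=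
  ({i : Fin n | y i ≠ ystar i}.ncard : ℝ) ≤ ε * n

/-- The weight set `W_ε`. -/
def weightSet (n : ℕ) (ε : ℝ) : Set (Fin n → ℝ) :=
  {w | (∀ i, 0 ≤ w i ∧ w i ≤ 1 / n) ∧ ∑ i, |w i - 1 / n| ≤ ε}

/-- The weighted loss `L^w(μ) = Σ_i w_i F(μ - y_i)`. -/
def wLoss {d n : ℕ} (F : EuclideanSpace ℝ (Fin d) → ℝ) (y : Fin n → EuclideanSpace ℝ (Fin d))
    (w : Fin n → ℝ) (μ : EuclideanSpace ℝ (Fin d)) : ℝ :=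
  ∑ i, w i * F (μ - y i)

/-- An (α,ρ)-semi-product random vector. -/
structure IsSemiProduct {Ω : Type*} [MeasurableSpace Ω] (P : Measure Ω) {d : ℕ} (α ρ : ℝ)
    (η : Ω → EuclideanSpace ℝ (Fin d)) : Prop where
  meas : Measurable η
  symm : ∀ j : Fin d, IdentDistrib (fun ω => η ω j) (fun ω => -(η ω j)) P P
  mass : ∀ j : Fin d, ENNReal.ofReal α ≤ P {ω | |η ω j| ≤ ρ}
  indep_sign_abs :
    IndepFun (fun ω => fun j : Fin d => Real.sign (η ω j))
      (fun ω => fun j : Fin d => |η ω j|) P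
  iIndep_sign :
    iIndepFun (fun j ω => Real.sign (η ω j)) P

/-- i.i.d. copies of an (α,ρ)-semi-product random vector. -/
def IsIIDSemiProduct {Ω : Type*} [MeasurableSpace Ω] (P : Measure Ω) {d n : ℕ} (α ρ : ℝ)
    (η : Fin n → Ω → EuclideanSpace ℝ (Fin d)) : Prop :=
  iIndepFun η P ∧
    (∀ i, IsSemiProduct P α ρ (η i)) ∧
    ∀ i j, IdentDistrib (η i) (η j) P P

/-- Outer product `x xᵀ` as a matrix. -/
def outerProd {d : ℕ} (x : EuclideanSpace ℝ (Fin d)) : Matrix (Fin d) (Fin d) ℝ :=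
  Matrix.of fun i j => x i * x j

/-- Operator (spectral) norm of a matrix, acting on Euclidean space. -/
def matOpNorm {d : ℕ} (M : Matrix (Fin d) (Fin d) ℝ) : ℝ :=
  ‖LinearMap.toContinuousLinearMap (Matrix.toEuclideanLin M)‖

/-- Frobenius norm of a matrix. -/
def frobNorm {d : ℕ} (M : Matrix (Fin d) (Fin d) ℝ) : ℝ :=
  Real.sqrt (∑ i, ∑ j, (M i j) ^ 2)

/-- Effective rank `r(Σ) = Tr(Σ)/‖Σ‖`. -/
def effRank {d : ℕ} (M : Matrix (Fin d) (Fin d) ℝ) : ℝ :=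
  M.trace / matOpNorm M

/-- Quadratic form `vᵀ M v`. -/
def quadForm {d : ℕ} (M : Matrix (Fin d) (Fin d) ℝ) (v : EuclideanSpace ℝ (Fin d)) : ℝ :=
  ∑ i, ∑ j, v i * M i j * v j

/-- The uniform (rotation-invariant) probability distribution on the unit sphere of `ℝ^d`. -/
def IsUniformOnSphere {d : ℕ} (μ : Measure (EuclideanSpace ℝ (Fin d))) : Prop :=
  IsProbabilityMeasure μ ∧ μ (Metric.sphere (0 : EuclideanSpace ℝ (Fin d)) 1) = 1 ∧
    ∀ O : EuclideanSpace ℝ (Fin d) ≃ₗᵢ[ℝ] EuclideanSpace ℝ (Fin d), μ.map O = μ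

/-- `max_{‖v‖=1} (Σ_i w_i ⟨g i, v⟩^{2k})^{1/(2k)}`. -/
def momSup {d n : ℕ} (k : ℕ) (g : Fin n → EuclideanSpace ℝ (Fin d)) (w : Fin n → ℝ) : ℝ :=
  sSup {x : ℝ | ∃ v : EuclideanSpace ℝ (Fin d), ‖v‖ = 1 ∧
    x = (∑ i, w i * (inner ℝ (g i) v : ℝ) ^ (2 * k)) ^ ((1 : ℝ) / (2 * k))}

/-- The random vector `R · Σ^{1/2} · U`. -/
def ellSample {Ω : Type*} {d : ℕ} (Ssqrt : Matrix (Fin d) (Fin d) ℝ) (R : Ω → ℝ)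
    (U : Ω → EuclideanSpace ℝ (Fin d)) : Ω → EuclideanSpace ℝ (Fin d) :=
  fun ω => R ω • Matrix.toEuclideanLin Ssqrt (U ω)


/-! ### Auxiliary lemmas -/

/-- Convexity-type gradient inequality for the Huber penalty. -/
lemma clip_mul_le_huber_sub {h x y : ℝ} (hh : 0 < h) :
    clip h y * (x - y) ≤ huber h x - huber h y := by
  unfold clip huber
  rcases le_or_gt |y| h with hy | hy
  · rw [if_pos hy, if_pos hy]
    rcases le_or_gt |x| h with hx | hx
    · rw [if_pos hx]
      nlinarith [sq_nonneg (x - y)]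
    · rw [if_neg (not_le.2 hx)]
      rcases abs_cases x with ⟨h1, _⟩ | ⟨h1, _⟩ <;>
        rcases abs_cases y with ⟨h3, _⟩ | ⟨h3, _⟩ <;>
          nlinarith [sq_nonneg (x - h), sq_nonneg (x + h), sq_nonneg (h - y), sq_nonneg (h + y)]
  · rw [if_neg (not_le.2 hy), if_neg (not_le.2 hy)]
    have hy0 : y ≠ 0 := by
      intro h0
      rw [h0] at hy; simp at hy; linarith
    rcases lt_trichotomy y 0 with hyneg | hy0' | hypos
    · rw [Real.sign_of_neg hyneg]
      have hya : |y| = -y := abs_of_neg hyneg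
      rcases le_or_gt |x| h with hx | hx
      · rw [if_pos hx]
        rcases abs_cases x with ⟨h1, _⟩ | ⟨h1, _⟩ <;> nlinarith [sq_nonneg (x + h)]
      · rw [if_neg (not_le.2 hx)]
        rcases abs_cases x with ⟨h1, _⟩ | ⟨h1, _⟩ <;> nlinarith
    · exact absurd hy0' hy0
    · rw [Real.sign_of_pos hypos]
      have hya : |y| = y := abs_of_pos hypos
      rcases le_or_gt |x| h with hx | hx
      · rw [if_pos hx]
        rcases abs_cases x with ⟨h1, _⟩ | ⟨h1, _⟩ <;> nlinarith [sq_nonneg (x - h)]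
      · rw [if_neg (not_le.2 hx)]
        rcases abs_cases x with ⟨h1, _⟩ | ⟨h1, _⟩ <;> nlinarith

/-- In the quadratic regime the Huber Bregman remainder is exactly `s²/2`. -/
lemma huber_quad {ρ y s : ℝ} (hρ : 0 < ρ) (hy : |y| ≤ ρ) (hs : |s| ≤ ρ) :
    huber (2 * ρ) (y + s) - huber (2 * ρ) y - clip (2 * ρ) y * s = s ^ 2 / 2 := by
  have h1 : |y| ≤ 2 * ρ := by linarith
  have h2 : |y + s| ≤ 2 * ρ := (abs_add_le _ _).trans (by linarith)
  unfold clip huber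
  rw [if_pos h2, if_pos h1, if_pos h1]
  ring

/-- Weights in `W_ε` are not much smaller than `1/n` on any index set. -/
lemma sum_weight_lower {n : ℕ} {ε : ℝ} {w : Fin n → ℝ} (hw : w ∈ weightSet n ε)
    (S : Finset (Fin n)) : (S.card : ℝ) * (1 / n) - ε ≤ ∑ i ∈ S, w i := by
  obtain ⟨hw1, hw2⟩ := hw
  have habs : ∑ i ∈ S, |w i - 1 / n| ≤ ε :=
    le_trans (Finset.sum_le_sum_of_subset_of_nonneg (Finset.subset_univ S)
      (fun i _ _ => abs_nonneg _)) hw2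
  have h1 : ∀ i ∈ S, 1 / (n : ℝ) - |w i - 1 / n| ≤ w i := by
    intro i _
    have := neg_abs_le (w i - 1 / (n : ℝ))
    linarith
  calc (S.card : ℝ) * (1 / n) - ε
      ≤ ∑ i ∈ S, (1 / (n : ℝ)) - ∑ i ∈ S, |w i - 1 / n| := by
        rw [Finset.sum_const, nsmul_eq_mul]
        linarith
    _ = ∑ i ∈ S, (1 / (n : ℝ) - |w i - 1 / n|) := by rw [Finset.sum_sub_distrib]
    _ ≤ ∑ i ∈ S, w i := Finset.sum_le_sum h1

/-- The deterministic part: on the good event, local strong convexity holds. -/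
lemma det_key {d n : ℕ} {α ρ ε : ℝ} (hα : 0 < α) (hρ : 0 < ρ)
    (hεα : ε ≤ 1 / 128 * α)
    (e y : Fin n → EuclideanSpace ℝ (Fin d))
    (hgood : ∀ j : Fin d, 3 / 4 * (α * n) < ∑ i, (if |e i j| ≤ ρ then (1 : ℝ) else 0))
    (μstar : EuclideanSpace ℝ (Fin d))
    (hy : IsCorruption ε (fun i => μstar + e i) y)
    (w : Fin n → ℝ) (hw : w ∈ weightSet n (2 * ε))
    (u : EuclideanSpace ℝ (Fin d)) (hu : ∀ j, |u j| ≤ ρ) :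
    α / 4 * ‖u‖ ^ 2 ≤
      wLoss (huberLoss (2 * ρ)) y w (μstar + u) - wLoss (huberLoss (2 * ρ)) y w μstar -
      (inner ℝ (∑ i, w i • clipVec (2 * ρ) (μstar - y i)) u : ℝ) := by
  classical
  set m : Fin n → Fin d → ℝ := fun i j => (μstar - y i) j with hm
  have hRHS : wLoss (huberLoss (2 * ρ)) y w (μstar + u) - wLoss (huberLoss (2 * ρ)) y w μstar -
      (inner ℝ (∑ i, w i • clipVec (2 * ρ) (μstar - y i)) u : ℝ)
      = ∑ j, ∑ i, w i * (huber (2 * ρ) (m i j + u j) - huber (2 * ρ) (m i j)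
          - clip (2 * ρ) (m i j) * u j) := by
    rw [Finset.sum_comm]
    simp only [wLoss, huberLoss, sum_inner, real_inner_smul_left, PiLp.inner_apply,
      PiLp.smul_apply, smul_eq_mul, RCLike.inner_apply, conj_trivial, clipVec,
      Finset.mul_sum, hm]
    rw [← Finset.sum_sub_distrib, ← Finset.sum_sub_distrib]
    refine Finset.sum_congr rfl fun i _ => ?_
    rw [← Finset.sum_sub_distrib, ← Finset.sum_sub_distrib]
    refine Finset.sum_congr rfl fun j _ => ?_
    have hcoord : (μstar + u - y i) j = (μstar - y i) j + u j := by
      simp only [PiLp.add_apply, PiLp.sub_apply]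
      ring
    rw [hcoord]
    ring
  have hnorm : ‖u‖ ^ 2 = ∑ j, (u j) ^ 2 := by
    rw [EuclideanSpace.norm_eq, Real.sq_sqrt (by positivity)]
    simp [sq_abs]
  rw [hRHS, hnorm, Finset.mul_sum]
  refine Finset.sum_le_sum fun j _ => ?_
  -- per-coordinate estimate
  set H : Finset (Fin n) := Finset.univ.filter (fun i => |e i j| ≤ ρ) with hH
  set B : Finset (Fin n) := Finset.univ.filter (fun i => y i ≠ μstar + e i) with hB
  set G : Finset (Fin n) := Finset.univ.filter (fun i => |m i j| ≤ ρ) with hG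
  have hHcard : 3 / 4 * (α * n) < (H.card : ℝ) := by
    have h := hgood j
    rwa [Finset.sum_boole] at h
  have hBcard : (B.card : ℝ) ≤ ε * n := by
    have hset : {i : Fin n | y i ≠ (fun i => μstar + e i) i}.ncard = B.card := by
      rw [← Set.ncard_coe_finset]
      congr 1
      ext i
      simp [hB]
    have := hy
    unfold IsCorruption at this
    rw [hset] at this
    exact this
  have hsub : H \ B ⊆ G := by
    intro i hi
    simp only [hH, hB, hG, Finset.mem_sdiff, Finset.mem_filter, Finset.mem_univ, true_and,
      not_not] at hi ⊢
    obtain ⟨h1, h2⟩ := hi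
    have hmij : m i j = -(e i j) := by
      simp only [hm, h2, PiLp.sub_apply, PiLp.add_apply]
      ring
    rw [hmij, abs_neg]
    exact h1
  have hn1 : (1 : ℝ) ≤ n := by
    have h0 : (0 : ℝ) ≤ 3 / 4 * (α * n) := by positivity
    have hH1 : (0 : ℝ) < H.card := lt_of_le_of_lt h0 hHcard
    have hH1' : 1 ≤ H.card := by exact_mod_cast hH1
    have hHn : H.card ≤ n := by
      have := Finset.card_le_card (Finset.subset_univ H)
      rwa [Finset.card_fin] at this
    exact_mod_cast le_trans hH1' hHn
  have hn0 : (0 : ℝ) < n := by linarith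
  have hGw : α / 2 ≤ ∑ i ∈ G, w i := by
    have h1 : ((H \ B).card : ℝ) * (1 / n) - 2 * ε ≤ ∑ i ∈ H \ B, w i := sum_weight_lower hw _
    have h2 : ∑ i ∈ H \ B, w i ≤ ∑ i ∈ G, w i :=
      Finset.sum_le_sum_of_subset_of_nonneg hsub (fun i _ _ => (hw.1 i).1)
    have h3 : (H.card : ℝ) ≤ ((H \ B).card : ℝ) + B.card := by
      exact_mod_cast Finset.card_le_card_sdiff_add_card (s := H) (t := B)
    have h4 : 3 / 4 * α - ε ≤ ((H \ B).card : ℝ) * (1 / n) := by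
      rw [mul_one_div, le_div_iff₀ hn0]
      nlinarith
    nlinarith
  have hhh : (0 : ℝ) < 2 * ρ := by linarith
  have hterm : ∀ i, 0 ≤ w i * (huber (2 * ρ) (m i j + u j) - huber (2 * ρ) (m i j)
      - clip (2 * ρ) (m i j) * u j) := by
    intro i
    refine mul_nonneg (hw.1 i).1 ?_
    have h := clip_mul_le_huber_sub (x := m i j + u j) (y := m i j) hhh
    rw [add_sub_cancel_left] at h
    linarith
  calc α / 4 * (u j) ^ 2 = ((u j) ^ 2 / 2) * (α / 2) := by ring
    _ ≤ ((u j) ^ 2 / 2) * ∑ i ∈ G, w i := by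
        apply mul_le_mul_of_nonneg_left hGw (by positivity)
    _ = ∑ i ∈ G, w i * ((u j) ^ 2 / 2) := by
        rw [Finset.mul_sum]
        exact Finset.sum_congr rfl fun i _ => mul_comm _ _
    _ = ∑ i ∈ G, w i * (huber (2 * ρ) (m i j + u j) - huber (2 * ρ) (m i j)
          - clip (2 * ρ) (m i j) * u j) := by
        refine Finset.sum_congr rfl fun i hi => ?_
        have hmij : |m i j| ≤ ρ := by
          simp only [hG, Finset.mem_filter, Finset.mem_univ, true_and] at hi
          exact hi
        rw [huber_quad hρ hmij (hu j)]
    _ ≤ ∑ i, w i * (huber (2 * ρ) (m i j + u j) - huber (2 * ρ) (m i j)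
          - clip (2 * ρ) (m i j) * u j) :=
        Finset.sum_le_sum_of_subset_of_nonneg (Finset.subset_univ G) (fun i _ _ => hterm i)

lemma exp_neg_quarter_le : Real.exp (-(1 / 4 : ℝ)) ≤ 51 / 64 := by
  have h8 : (9 / 8 : ℝ) ≤ Real.exp (1 / 8) := by
    have := Real.add_one_le_exp (1 / 8 : ℝ)
    linarith
  have h4 : (81 / 64 : ℝ) ≤ Real.exp (1 / 4) := by
    have hsplit : Real.exp (1 / 4 : ℝ) = Real.exp (1 / 8) * Real.exp (1 / 8) := by
      rw [← Real.exp_add]; norm_num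
    nlinarith [Real.exp_pos (1 / 8 : ℝ)]
  have h0 : (0 : ℝ) < Real.exp (1 / 4) := Real.exp_pos _
  rw [Real.exp_neg]
  rw [inv_le_comm₀ h0 (by norm_num)]
  linarith

/-- local strong convexity of the entry-wise Huber loss for
semi-product distributions. -/
theorem local_strong_convexity_semiProduct :
    ∃ c C : ℝ, 0 < c ∧ 0 < C ∧
      ∀ (d n : ℕ) (Ω : Type) (_ : MeasurableSpace Ω) (P : Measure Ω),
        IsProbabilityMeasure P →
      ∀ (α ρ ε : ℝ), 0 < α → 0 < ρ → 0 < ε → ε ≤ c * α →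
        C * Real.log d / α ≤ n →
      ∀ η : Fin n → Ω → EuclideanSpace ℝ (Fin d),
        IsIIDSemiProduct P α ρ η →
      ∀ μstar : EuclideanSpace ℝ (Fin d),
        ENNReal.ofReal (1 - Real.exp (-(c * α * n))) ≤
          P {ω | ∀ y : Fin n → EuclideanSpace ℝ (Fin d),
            IsCorruption ε (fun i => μstar + η i ω) y →
            ∀ w ∈ weightSet n (2 * ε),
            ∀ u : EuclideanSpace ℝ (Fin d), (∀ j, |u j| ≤ ρ) →
              α / 4 * ‖u‖ ^ 2 ≤
                wLoss (huberLoss (2 * ρ)) y w (μstar + u) -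
                  wLoss (huberLoss (2 * ρ)) y w μstar -
                  (inner ℝ (∑ i, w i • clipVec (2 * ρ) (μstar - y i)) u : ℝ)} := by
  classical
  refine ⟨1 / 128, 128, by norm_num, by norm_num, ?_⟩
  intro d n Ω mΩ P hP α ρ ε hα hρ hε hεα hn η hη μstar
  haveI := hP
  obtain ⟨hind, hsp, -⟩ := hη
  set t : ℝ := -(1 / 4) with ht
  have htle : t ≤ 0 := by rw [ht]; norm_num
  set X : Fin d → Fin n → Ω → ℝ := fun j i ω => if |η i ω j| ≤ ρ then 1 else 0 with hX
  have hevalMeas : ∀ j : Fin d, Measurable (fun x : EuclideanSpace ℝ (Fin d) => x j) :=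
    fun j => (measurable_pi_apply j).comp (WithLp.measurable_ofLp 2 (Fin d → ℝ))
  have hηcoord : ∀ (i : Fin n) (j : Fin d), Measurable (fun ω => η i ω j) := by
    intro i j
    exact (hevalMeas j).comp (hsp i).meas
  have hA : ∀ (j : Fin d) (i : Fin n), MeasurableSet {ω | |η i ω j| ≤ ρ} :=
    fun j i => measurableSet_le (hηcoord i j).abs measurable_const
  have hXmeas : ∀ j i, Measurable (X j i) := by
    intro j i
    exact Measurable.ite (hA j i) measurable_const measurable_const
  set Bad : Fin d → Set Ω := fun j => {ω | (∑ i, X j i ω) ≤ 3 / 4 * (α * n)} with hBad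
  have hBadMeas : ∀ j, MeasurableSet (Bad j) :=
    fun j => measurableSet_le (Finset.measurable_sum _ fun i _ => hXmeas j i) measurable_const
  -- Chernoff bound per coordinate
  have hchern : ∀ j, (P (Bad j)).toReal ≤ Real.exp (-(α * n / 64)) := by
    intro j
    have hIndep : iIndepFun (X j) P := by
      have := hind.comp (fun _ : Fin n => fun x : EuclideanSpace ℝ (Fin d) =>
        if |x j| ≤ ρ then (1 : ℝ) else 0)
        (fun _ => Measurable.ite
          (measurableSet_le (hevalMeas j).abs measurable_const)
          measurable_const measurable_const)
      exact this
    have hexp_eq : ∀ (i : Fin n) (ω : Ω), Real.exp (t * X j i ω) =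
        Set.indicator {ω | |η i ω j| ≤ ρ} (fun _ => Real.exp t - 1) ω + 1 := by
      intro i ω
      by_cases hc : |η i ω j| ≤ ρ
      · have hmem : ω ∈ {ω | |η i ω j| ≤ ρ} := hc
        simp only [hX, if_pos hc, mul_one, Set.indicator_of_mem hmem]
        ring
      · have hmem : ω ∉ {ω | |η i ω j| ≤ ρ} := hc
        simp only [hX, if_neg hc, mul_zero, Real.exp_zero, Set.indicator_of_notMem hmem]
        ring
    have hint : ∀ i : Fin n, Integrable (fun ω => Real.exp (t * X j i ω)) P := by
      intro i
      rw [funext (hexp_eq i)]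
      exact ((integrable_const (Real.exp t - 1)).indicator (hA j i)).add (integrable_const 1)
    have hmgf : ∀ i : Fin n, mgf (X j i) P t ≤ Real.exp ((Real.exp t - 1) * α) := by
      intro i
      have hp : α ≤ (P {ω | |η i ω j| ≤ ρ}).toReal :=
        (ENNReal.ofReal_le_iff_le_toReal (measure_ne_top P _)).1 ((hsp i).mass j)
      have hmgf_eq : mgf (X j i) P t
          = (Real.exp t - 1) * (P {ω | |η i ω j| ≤ ρ}).toReal + 1 := by
        unfold mgf
        rw [funext (hexp_eq i),
          integral_add ((integrable_const (Real.exp t - 1)).indicator (hA j i))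
            (integrable_const 1),
          integral_indicator_const _ (hA j i), integral_const, probReal_univ]
        simp [smul_eq_mul, mul_comm, Measure.real]
      rw [hmgf_eq]
      have het : Real.exp t - 1 ≤ 0 := by
        have : Real.exp t ≤ 1 := Real.exp_le_one_iff.2 htle
        linarith
      have h1 : (Real.exp t - 1) * (P {ω | |η i ω j| ≤ ρ}).toReal ≤ (Real.exp t - 1) * α :=
        mul_le_mul_of_nonpos_left hp het
      have h2 := Real.add_one_le_exp ((Real.exp t - 1) * α)
      linarith
    have hS : Bad j = {ω | (∑ i, X j i) ω ≤ 3 / 4 * (α * n)} := by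
      ext ω
      simp [hBad, Finset.sum_apply]
    have h1 := measure_le_le_exp_mul_mgf (X := ∑ i, X j i) (μ := P) (3 / 4 * (α * n)) htle
      (hIndep.integrable_exp_mul_sum (fun i => hXmeas j i) (fun i _ => hint i))
    rw [← hS, hIndep.mgf_sum (fun i => hXmeas j i) Finset.univ] at h1
    have h2 : ∏ i : Fin n, mgf (X j i) P t ≤ Real.exp ((Real.exp t - 1) * α) ^ n := by
      calc ∏ i : Fin n, mgf (X j i) P t
          ≤ ∏ _i : Fin n, Real.exp ((Real.exp t - 1) * α) :=
            Finset.prod_le_prod (fun i _ => mgf_nonneg) (fun i _ => hmgf i)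
        _ = Real.exp ((Real.exp t - 1) * α) ^ n := by
            rw [Finset.prod_const, Finset.card_fin]
      
    have h3 : (P (Bad j)).toReal
        ≤ Real.exp (-t * (3 / 4 * (α * n))) * Real.exp ((Real.exp t - 1) * α) ^ n := by
      refine h1.trans ?_
      exact mul_le_mul_of_nonneg_left h2 (Real.exp_pos _).le
    have h4 : Real.exp (-t * (3 / 4 * (α * n))) * Real.exp ((Real.exp t - 1) * α) ^ n
        = Real.exp (-t * (3 / 4 * (α * n)) + n * ((Real.exp t - 1) * α)) := by
      rw [← Real.exp_nat_mul, ← Real.exp_add]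
    have h5 : -t * (3 / 4 * (α * n)) + n * ((Real.exp t - 1) * α) ≤ -(α * n / 64) := by
      have he : Real.exp t ≤ 51 / 64 := by rw [ht]; exact exp_neg_quarter_le
      have hn0 : (0 : ℝ) ≤ n := Nat.cast_nonneg n
      have hαn : (0 : ℝ) ≤ α * n := mul_nonneg hα.le hn0
      rw [ht]
      nlinarith
    refine h3.trans ?_
    rw [h4]
    exact Real.exp_le_exp.2 h5
  -- union bound
  have hUnion : P (⋃ j, Bad j) ≤ ENNReal.ofReal (Real.exp (-(1 / 128 * α * n))) := by
    calc P (⋃ j, Bad j) ≤ ∑ j, P (Bad j) := measure_iUnion_fintype_le P Bad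
      _ ≤ ∑ _j : Fin d, ENNReal.ofReal (Real.exp (-(α * n / 64))) := by
          refine Finset.sum_le_sum fun j _ => ?_
          rw [← ENNReal.ofReal_toReal (measure_ne_top P (Bad j))]
          exact ENNReal.ofReal_le_ofReal (hchern j)
      _ = (d : ℝ≥0∞) * ENNReal.ofReal (Real.exp (-(α * n / 64))) := by
          rw [Finset.sum_const, Finset.card_fin, nsmul_eq_mul]
      _ ≤ ENNReal.ofReal (Real.exp (-(1 / 128 * α * n))) := by
          rw [← ENNReal.ofReal_natCast d, ← ENNReal.ofReal_mul (Nat.cast_nonneg d)]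
          apply ENNReal.ofReal_le_ofReal
          rcases Nat.eq_zero_or_pos d with hd | hd
          · rw [hd]
            simp only [Nat.cast_zero, zero_mul]
            positivity
          · have hd1 : (1 : ℝ) ≤ d := by exact_mod_cast hd
            have hd0 : (0 : ℝ) < d := by linarith
            have hlog : Real.log d ≤ α * n / 128 := by
              rw [div_le_iff₀ hα] at hn
              linarith
            calc (d : ℝ) * Real.exp (-(α * n / 64))
                = Real.exp (Real.log d + -(α * n / 64)) := by
                  rw [Real.exp_add, Real.exp_log hd0]
              _ ≤ Real.exp (-(1 / 128 * α * n)) := Real.exp_le_exp.2 (by linarith)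
  -- the good event implies the conclusion
  have hsubset : (⋃ j, Bad j)ᶜ ⊆ {ω | ∀ y : Fin n → EuclideanSpace ℝ (Fin d),
      IsCorruption ε (fun i => μstar + η i ω) y →
      ∀ w ∈ weightSet n (2 * ε),
      ∀ u : EuclideanSpace ℝ (Fin d), (∀ j, |u j| ≤ ρ) →
        α / 4 * ‖u‖ ^ 2 ≤
          wLoss (huberLoss (2 * ρ)) y w (μstar + u) -
            wLoss (huberLoss (2 * ρ)) y w μstar -
            (inner ℝ (∑ i, w i • clipVec (2 * ρ) (μstar - y i)) u : ℝ)} := by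
    intro ω hω
    simp only [Set.mem_compl_iff, Set.mem_iUnion, not_exists] at hω
    intro y hy w hw u hu
    refine det_key hα hρ hεα (fun i => η i ω) y ?_ μstar hy w hw u hu
    intro j
    exact not_le.1 (hω j)
  calc ENNReal.ofReal (1 - Real.exp (-(1 / 128 * α * n)))
      = 1 - ENNReal.ofReal (Real.exp (-(1 / 128 * α * n))) := by
        rw [ENNReal.ofReal_sub _ (Real.exp_pos _).le, ENNReal.ofReal_one]
    _ ≤ 1 - P (⋃ j, Bad j) := tsub_le_tsub_left hUnion 1
    _ = P ((⋃ j, Bad j)ᶜ) := (prob_compl_eq_one_sub (MeasurableSet.iUnion hBadMeas)).symm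
    _ ≤ _ := measure_mono hsubset

end
end

section
/- Let α, ρ > 0, let η_1, …, η_n be i.i.d. copies of an (α,ρ)-semi-product random vector in ℝ^d, and let f = f_{2ρ} be the gradient of the entry-wise Huber loss with parameter 2ρ. Then for every δ ∈ (0,1), with probability at least 1−δ, ‖(1/n)·Σ_{i=1}^n f(η_i)‖ ≤ 10·ρ·√((d + log(1/δ))/n). -/
open MeasureTheory ProbabilityTheory Real
open scoped BigOperators ENNReal NNReal Classical

noncomputable section

lemma GB_measurable_sign : Measurable Real.sign := by
  have : Real.sign = fun r : ℝ => if r < 0 then (-1:ℝ) else if 0 < r then 1 else 0 := by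
    funext r; rfl
  rw [this]
  exact Measurable.ite (measurableSet_lt measurable_id measurable_const) measurable_const
    (Measurable.ite (measurableSet_lt measurable_const measurable_id) measurable_const
      measurable_const)

lemma GB_sign_mul_abs (t : ℝ) : Real.sign t * |t| = t := by
  rcases lt_trichotomy t 0 with h | h | h
  · rw [Real.sign_of_neg h, abs_of_neg h]; ring
  · simp [h]
  · rw [Real.sign_of_pos h, abs_of_pos h]; ring

lemma GB_abs_sign_le_one (t : ℝ) : |Real.sign t| ≤ 1 := by
  rcases Real.sign_apply_eq t with h | h | h <;> rw [h] <;> norm_num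

lemma GB_clip_eq (h t : ℝ) : clip h t = Real.sign t * min |t| h := by
  unfold clip
  split_ifs with hth
  · rw [min_eq_left hth, GB_sign_mul_abs]
  · rw [min_eq_right (le_of_not_ge hth), mul_comm]

lemma GB_measurable_clip (h : ℝ) : Measurable (clip h) := by
  unfold clip
  exact Measurable.ite (measurableSet_le (measurable_id.abs) measurable_const) measurable_id
    (measurable_const.mul GB_measurable_sign)

lemma GB_lintegral_prod_iIndep {Ω ι : Type*} [MeasurableSpace Ω] {P : Measure Ω}
    [IsProbabilityMeasure P] {F : ι → Ω → ℝ≥0∞} (hmeas : ∀ i, Measurable (F i))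
    (hind : iIndepFun F P) (s : Finset ι) :
    ∫⁻ ω, ∏ i ∈ s, F i ω ∂P = ∏ i ∈ s, ∫⁻ ω, F i ω ∂P := by
  classical
  induction s using Finset.induction_on with
  | empty => simp
  | insert _ _ ha ih =>
    rename_i a s
    simp_rw [Finset.prod_insert ha]
    have hindep : IndepFun (∏ j ∈ s, F j) (F a) P :=
      hind.indepFun_finsetProd_of_notMem hmeas ha
    have hpm : Measurable (fun ω => ∏ j ∈ s, F j ω) :=
      Finset.measurable_prod s (fun j _ => hmeas j)
    have hprodeq : (fun ω => ∏ j ∈ s, F j ω) = ∏ j ∈ s, F j := by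
      funext ω; simp [Finset.prod_apply]
    calc ∫⁻ ω, F a ω * ∏ j ∈ s, F j ω ∂P
        = ∫⁻ ω, (∏ j ∈ s, F j ω) * F a ω ∂P := by simp_rw [mul_comm]
      _ = (∫⁻ ω, ∏ j ∈ s, F j ω ∂P) * ∫⁻ ω, F a ω ∂P := by
          have := lintegral_mul_eq_lintegral_mul_lintegral_of_indepFun''
            (hpm.aemeasurable) (hmeas a).aemeasurable (hprodeq ▸ hindep)
          simpa [hprodeq] using this
      _ = (∏ j ∈ s, ∫⁻ ω, F j ω ∂P) * ∫⁻ ω, F a ω ∂P := by rw [ih]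
      _ = _ := by ring

lemma GB_lmarginal_pi_prod {ι : Type*} [Fintype ι] (μ : ι → Measure ℝ)
    [∀ i, SigmaFinite (μ i)] (f : ι → ℝ → ℝ≥0∞) (hf : ∀ i, Measurable (f i))
    (s : Finset ι) (x : ι → ℝ) :
    (∫⋯∫⁻_s, (fun y => ∏ i, f i (y i)) ∂μ) x
      = (∏ i ∈ s, ∫⁻ t, f i t ∂μ i) * ∏ i ∈ sᶜ, f i (x i) := by
  classical
  have hmeas : Measurable (fun y : ι → ℝ => ∏ i, f i (y i)) :=
    Finset.measurable_prod _ (fun i _ => (hf i).comp (measurable_pi_apply i))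
  induction s using Finset.induction_on generalizing x with
  | empty => simp [lmarginal_empty]
  | insert _ _ ha ih =>
    rename_i a s
    rw [lmarginal_insert _ hmeas ha]
    have hstep : ∀ t : ℝ,
        (∫⋯∫⁻_s, (fun y => ∏ i, f i (y i)) ∂μ) (Function.update x a t)
          = ((∏ i ∈ s, ∫⁻ t, f i t ∂μ i) * ∏ i ∈ sᶜ.erase a, f i (x i)) * f a t := by
      intro t
      rw [ih]
      have hac : a ∈ sᶜ := by simp [ha]
      rw [← Finset.mul_prod_erase sᶜ _ hac]
      have : ∀ i ∈ sᶜ.erase a, f i (Function.update x a t i) = f i (x i) := by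
        intro i hi
        rw [Function.update_of_ne (Finset.ne_of_mem_erase hi)]
      rw [Finset.prod_congr rfl this, Function.update_self]
      ring
    simp_rw [hstep]
    rw [lintegral_const_mul _ (hf a)]
    rw [Finset.prod_insert ha]
    have : (insert a s)ᶜ = sᶜ.erase a := by
      ext i; simp [Finset.mem_erase, and_comm, eq_comm, not_or]
    rw [this]
    ring

lemma GB_lintegral_pi_prod {ι : Type*} [Fintype ι] (μ : ι → Measure ℝ)
    [∀ i, SigmaFinite (μ i)] (f : ι → ℝ → ℝ≥0∞) (hf : ∀ i, Measurable (f i)) :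
    ∫⁻ x, ∏ i, f i (x i) ∂Measure.pi μ = ∏ i, ∫⁻ t, f i t ∂μ i := by
  rw [lintegral_eq_lmarginal_univ (fun _ => (0:ℝ)), GB_lmarginal_pi_prod μ f hf]
  simp

lemma GB_gauss_density (g : ℝ → ℝ≥0∞) (hg : Measurable g) :
    ∫⁻ x, g x ∂(gaussianReal 0 1) = ∫⁻ x, ENNReal.ofReal (gaussianPDFReal 0 1 x) * g x := by
  rw [gaussianReal_of_var_ne_zero 0 one_ne_zero,
    lintegral_withDensity_eq_lintegral_mul _ (measurable_gaussianPDF 0 1) hg]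
  rfl

lemma GB_lintegral_exp_mul_gauss (c : ℝ) :
    ∫⁻ x, ENNReal.ofReal (rexp (c * x)) ∂(gaussianReal 0 1)
      = ENNReal.ofReal (rexp (c ^ 2 / 2)) := by
  rw [GB_gauss_density _ ((by fun_prop : Measurable fun x : ℝ => ENNReal.ofReal (rexp (c * x))))]
  have hpt : ∀ x : ℝ, ENNReal.ofReal (gaussianPDFReal 0 1 x) * ENNReal.ofReal (rexp (c * x))
      = ENNReal.ofReal (rexp (c ^ 2 / 2)) * ENNReal.ofReal (gaussianPDFReal c 1 x) := by
    intro x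
    rw [← ENNReal.ofReal_mul (gaussianPDFReal_nonneg 0 1 x),
      ← ENNReal.ofReal_mul (Real.exp_nonneg _)]
    congr 1
    unfold gaussianPDFReal
    push_cast
    rw [mul_assoc, ← Real.exp_add]
    have harg : -(x - 0) ^ 2 / (2 * 1) + c * x = c ^ 2 / 2 + -(x - c) ^ 2 / (2 * 1) := by ring
    rw [harg, Real.exp_add]
    ring
  simp_rw [hpt]
  rw [lintegral_const_mul _ ((measurable_gaussianPDFReal c 1).ennreal_ofReal)]
  have : ∫⁻ x, ENNReal.ofReal (gaussianPDFReal c 1 x) = 1 :=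
    lintegral_gaussianPDFReal_eq_one c one_ne_zero
  rw [this, mul_one]

lemma GB_lintegral_exp_sq_quarter_gauss :
    ∫⁻ x, ENNReal.ofReal (rexp (x ^ 2 / 4)) ∂(gaussianReal 0 1)
      = ENNReal.ofReal (Real.sqrt 2) := by
  rw [GB_gauss_density _ ((by fun_prop : Measurable fun x : ℝ => ENNReal.ofReal (rexp (x ^ 2 / 4))))]
  have hpt : ∀ x : ℝ, ENNReal.ofReal (gaussianPDFReal 0 1 x) * ENNReal.ofReal (rexp (x ^ 2 / 4))
      = ENNReal.ofReal ((√(2 * π))⁻¹) * ENNReal.ofReal (rexp (-(4⁻¹ : ℝ) * x ^ 2)) := by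
    intro x
    rw [← ENNReal.ofReal_mul (gaussianPDFReal_nonneg 0 1 x),
      ← ENNReal.ofReal_mul (by positivity)]
    congr 1
    unfold gaussianPDFReal
    push_cast
    rw [mul_assoc, ← Real.exp_add]
    have harg : -(x - 0) ^ 2 / (2 * 1) + x ^ 2 / 4 = -(4⁻¹:ℝ) * x ^ 2 := by ring
    rw [harg]
    congr 1
    norm_num
  simp_rw [hpt]
  rw [lintegral_const_mul _ ((by fun_prop : Measurable fun x : ℝ => ENNReal.ofReal (rexp (-(4⁻¹:ℝ) * x ^ 2))))]
  have hint : Integrable (fun x : ℝ => rexp (-(4⁻¹ : ℝ) * x ^ 2)) :=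
    integrable_exp_neg_mul_sq (by norm_num)
  rw [← ofReal_integral_eq_lintegral_ofReal hint
    (Filter.Eventually.of_forall fun x => (Real.exp_nonneg _))]
  rw [integral_gaussian]
  rw [← ENNReal.ofReal_mul (by positivity)]
  congr 1
  rw [← Real.sqrt_inv, ← Real.sqrt_mul (by positivity)]
  congr 1
  rw [div_eq_mul_inv, inv_inv]
  field_simp
  ring

lemma GB_lintegral_exp_symm_le {Ω : Type*} [MeasurableSpace Ω] (P : Measure Ω)
    [IsProbabilityMeasure P] (X : Ω → ℝ) (hX : Measurable X)
    (hsymm : IdentDistrib X (fun ω => -X ω) P P) (hbdd : ∀ ω, |X ω| ≤ 1) (c : ℝ) :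
    ∫⁻ ω, ENNReal.ofReal (rexp (c * X ω)) ∂P ≤ ENNReal.ofReal (rexp (c ^ 2 / 2)) := by
  set I := ∫⁻ ω, ENNReal.ofReal (rexp (c * X ω)) ∂P with hI
  have hmeas : Measurable fun ω => ENNReal.ofReal (rexp (c * X ω)) := by fun_prop
  have hflip : I = ∫⁻ ω, ENNReal.ofReal (rexp (c * (-X ω))) ∂P := by
    exact (hsymm.comp (u := fun t : ℝ => ENNReal.ofReal (rexp (c * t)))
      (by fun_prop)).lintegral_eq
  have hsum : I + I = ∫⁻ ω, ENNReal.ofReal (2 * Real.cosh (c * X ω)) ∂P := by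
    nth_rewrite 2 [hflip]
    nth_rewrite 1 [hI]
    rw [← lintegral_add_left hmeas]
    congr 1
    funext ω
    rw [← ENNReal.ofReal_add (Real.exp_nonneg _) (Real.exp_nonneg _)]
    congr 1
    rw [Real.cosh_eq]
    ring_nf
  have hbound : ∫⁻ ω, ENNReal.ofReal (2 * Real.cosh (c * X ω)) ∂P
      ≤ ENNReal.ofReal (2 * rexp (c ^ 2 / 2)) := by
    calc ∫⁻ ω, ENNReal.ofReal (2 * Real.cosh (c * X ω)) ∂P
        ≤ ∫⁻ _ω, ENNReal.ofReal (2 * rexp (c ^ 2 / 2)) ∂P := ?_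
      _ = ENNReal.ofReal (2 * rexp (c ^ 2 / 2)) := by
          rw [lintegral_const, measure_univ, mul_one]
    refine lintegral_mono fun ω => ?_
    apply ENNReal.ofReal_le_ofReal
    · 
      have h1 : Real.cosh (c * X ω) ≤ Real.cosh c := by
        rw [← Real.cosh_abs c]
        apply Real.cosh_le_cosh.mpr
        rw [abs_abs, abs_mul]
        calc |c| * |X ω| ≤ |c| * 1 := by
              exact mul_le_mul_of_nonneg_left (hbdd ω) (abs_nonneg c)
          _ = |c| := mul_one _
      have h2 : Real.cosh c ≤ rexp (c ^ 2 / 2) := Real.cosh_le_exp_half_sq c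
      nlinarith
  have h2 : ENNReal.ofReal (2 * rexp (c ^ 2 / 2)) = 2 * ENNReal.ofReal (rexp (c ^ 2 / 2)) := by
    rw [ENNReal.ofReal_mul (by norm_num)]
    norm_num
  have : 2 * I ≤ 2 * ENNReal.ofReal (rexp (c ^ 2 / 2)) := by
    rw [two_mul, ← h2]
    exact hsum ▸ hbound
  exact (ENNReal.mul_le_mul_iff_right (by norm_num) (by norm_num)).mp this

lemma GB_ofReal_exp_sum {ι : Type*} (s : Finset ι) (f : ι → ℝ) :
    ENNReal.ofReal (rexp (∑ i ∈ s, f i)) = ∏ i ∈ s, ENNReal.ofReal (rexp (f i)) := by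
  classical
  induction s using Finset.induction_on with
  | empty => simp
  | insert _ _ ha ih =>
    rename_i a s
    rw [Finset.sum_insert ha, Finset.prod_insert ha, Real.exp_add,
      ENNReal.ofReal_mul (Real.exp_nonneg _), ih]

lemma GB_per_vector {d : ℕ} {Ω : Type*} [MeasurableSpace Ω] (P : Measure Ω)
    [IsProbabilityMeasure P] {α ρ : ℝ} (hρ : 0 < ρ) (η : Ω → EuclideanSpace ℝ (Fin d))
    (h : IsSemiProduct P α ρ η) (lam : ℝ) (g : Fin d → ℝ) :
    ∫⁻ ω, ENNReal.ofReal (rexp (∑ j, lam * g j * clip (2 * ρ) (η ω j))) ∂P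
      ≤ ENNReal.ofReal (rexp (∑ j, lam ^ 2 * g j ^ 2 * (2 * ρ) ^ 2 / 2)) := by
  classical
  have hηj : ∀ j : Fin d, Measurable fun ω => η ω j := fun j =>
    (measurable_pi_apply j).comp ((WithLp.measurable_ofLp 2 _).comp h.meas)
  set ε : Ω → (Fin d → ℝ) := fun ω j => Real.sign (η ω j) with hε
  set b : Ω → (Fin d → ℝ) := fun ω j => min |η ω j| (2 * ρ) with hb
  have hmeasε : Measurable ε := measurable_pi_lambda _ fun j => GB_measurable_sign.comp (hηj j)
  have hmeasb : Measurable b := measurable_pi_lambda _ fun j => ((hηj j).abs.min measurable_const)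
  have hIndep : IndepFun ε b P := by
    have h2 := h.indep_sign_abs
    exact h2.comp measurable_id
      (measurable_pi_lambda _ fun j => (measurable_pi_apply j).min measurable_const)
  have map_pair : P.map (fun ω => (ε ω, b ω)) = (P.map ε).prod (P.map b) :=
    (indepFun_iff_map_prod_eq_prod_map_map hmeasε.aemeasurable hmeasb.aemeasurable).1 hIndep
  set H : (Fin d → ℝ) × (Fin d → ℝ) → ℝ≥0∞ :=
    fun p => ENNReal.ofReal (rexp (∑ j, lam * g j * p.2 j * p.1 j)) with hH
  have hHmeas : Measurable H := by
    apply Measurable.ennreal_ofReal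
    apply Real.measurable_exp.comp
    apply Finset.measurable_sum
    intro j _
    exact ((measurable_const.mul ((measurable_pi_apply j).comp measurable_snd)).mul
      ((measurable_pi_apply j).comp measurable_fst))
  have hpt : ∀ ω, ENNReal.ofReal (rexp (∑ j, lam * g j * clip (2 * ρ) (η ω j)))
      = H (ε ω, b ω) := by
    intro ω
    rw [hH]
    congr 1
    congr 1
    apply Finset.sum_congr rfl
    intro j _
    rw [GB_clip_eq]
    ring
  simp_rw [hpt]
  have hinner : ∀ a : Fin d → ℝ,
      ∫⁻ e, H (e, a) ∂(P.map ε) ≤ ENNReal.ofReal (rexp (∑ j, (lam * g j * a j) ^ 2 / 2)) := by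
    intro a
    have hmeasHe : Measurable fun e : Fin d → ℝ => H (e, a) :=
      hHmeas.comp (measurable_id.prodMk measurable_const)
    rw [lintegral_map hmeasHe hmeasε]
    have hform : ∀ ω, H (ε ω, a) = ∏ j, ENNReal.ofReal (rexp
        ((lam * g j * a j) * Real.sign (η ω j))) := by
      intro ω
      rw [hH]
      simp only
      rw [GB_ofReal_exp_sum]
    simp_rw [hform]
    have hind : iIndepFun
        (fun j ω => ENNReal.ofReal (rexp ((lam * g j * a j) * Real.sign (η ω j)))) P := by
      have := h.iIndep_sign.comp
        (fun j (t : ℝ) => ENNReal.ofReal (rexp ((lam * g j * a j) * t)))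
        (fun j => by fun_prop)
      exact this
    have hFmeas : ∀ j : Fin d, Measurable fun ω =>
        ENNReal.ofReal (rexp ((lam * g j * a j) * Real.sign (η ω j))) := by
      intro j
      exact ((GB_measurable_sign.comp (hηj j)).const_mul _).exp.ennreal_ofReal
    rw [GB_lintegral_prod_iIndep hFmeas hind Finset.univ]
    rw [GB_ofReal_exp_sum]
    apply Finset.prod_le_prod' <;> try intro j _
    · apply GB_lintegral_exp_symm_le P _ (GB_measurable_sign.comp (hηj j))
      · have h1 := (h.symm j).comp (u := Real.sign) GB_measurable_sign
        have h2 : (Real.sign ∘ fun ω => -η ω j) = fun ω => -Real.sign (η ω j) := by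
          funext ω; simp [Function.comp, Real.sign_neg]
        rw [h2] at h1
        exact h1
      · intro ω; exact GB_abs_sign_le_one _
  calc ∫⁻ ω, H (ε ω, b ω) ∂P
      = ∫⁻ p, H p ∂(P.map (fun ω => (ε ω, b ω))) :=
        (lintegral_map hHmeas (hmeasε.prodMk hmeasb)).symm
    _ = ∫⁻ p, H p ∂((P.map ε).prod (P.map b)) := by rw [map_pair]
    _ = ∫⁻ a, ∫⁻ e, H (e, a) ∂(P.map ε) ∂(P.map b) :=
        lintegral_prod_symm' H hHmeas
    _ ≤ ∫⁻ a, ENNReal.ofReal (rexp (∑ j, (lam * g j * a j) ^ 2 / 2)) ∂(P.map b) :=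
        lintegral_mono fun a => hinner a
    _ = ∫⁻ ω, ENNReal.ofReal (rexp (∑ j, (lam * g j * b ω j) ^ 2 / 2)) ∂P := by
        rw [lintegral_map _ hmeasb]
        apply Measurable.ennreal_ofReal
        apply Real.measurable_exp.comp
        exact Finset.measurable_sum _ fun j _ =>
          (((measurable_const.mul (measurable_pi_apply j)).pow_const 2).div_const 2)
    _ ≤ ∫⁻ _ω, ENNReal.ofReal (rexp (∑ j, lam ^ 2 * g j ^ 2 * (2 * ρ) ^ 2 / 2)) ∂P := by
        apply lintegral_mono
        intro ω
        apply ENNReal.ofReal_le_ofReal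
        apply Real.exp_le_exp.mpr
        apply Finset.sum_le_sum
        intro j _
        have hb0 : 0 ≤ b ω j := le_min (abs_nonneg _) (by positivity)
        have hb2 : b ω j ≤ 2 * ρ := min_le_right _ _
        have : (lam * g j * b ω j) ^ 2 ≤ lam ^ 2 * g j ^ 2 * (2 * ρ) ^ 2 := by
          rw [mul_pow, mul_pow]
          exact mul_le_mul_of_nonneg_left (pow_le_pow_left₀ hb0 hb2 2) (by positivity)
        linarith
    _ = ENNReal.ofReal (rexp (∑ j, lam ^ 2 * g j ^ 2 * (2 * ρ) ^ 2 / 2)) := by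
        rw [lintegral_const, measure_univ, mul_one]

lemma GB_main_mgf {d n : ℕ} {Ω : Type*} [MeasurableSpace Ω] (P : Measure Ω)
    [IsProbabilityMeasure P] {α ρ : ℝ} (hρ : 0 < ρ)
    (η : Fin n → Ω → EuclideanSpace ℝ (Fin d))
    (hind : iIndepFun η P)
    (hsp : ∀ i, IsSemiProduct P α ρ (η i)) (hn : 0 < n) :
    ∫⁻ ω, ENNReal.ofReal (rexp ((16 * n * ρ ^ 2)⁻¹ *
        ∑ j, (∑ i, clip (2 * ρ) (η i ω j)) ^ 2)) ∂P
      ≤ ENNReal.ofReal (Real.sqrt 2 ^ d) := by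
  classical
  have hn' : (0:ℝ) < n := by exact_mod_cast hn
  set s : ℝ := (16 * n * ρ ^ 2)⁻¹ with hsdef
  have hs : 0 < s := by rw [hsdef]; positivity
  set lam : ℝ := Real.sqrt (2 * s) with hlamdef
  have hlam2 : lam ^ 2 = 2 * s := Real.sq_sqrt (by positivity)
  set Sc : Ω → Fin d → ℝ := fun ω j => ∑ i, clip (2 * ρ) (η i ω j) with hScdef
  have hηij : ∀ (i : Fin n) (j : Fin d), Measurable fun ω => η i ω j := fun i j =>
    (measurable_pi_apply j).comp ((WithLp.measurable_ofLp 2 _).comp (hsp i).meas)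
  have hmeasScj : ∀ j, Measurable fun ω => Sc ω j := fun j =>
    Finset.measurable_sum _ fun i _ => (GB_measurable_clip (2 * ρ)).comp (hηij i j)
  set G : Measure (Fin d → ℝ) := Measure.pi fun _ : Fin d => gaussianReal 0 1 with hGdef
  -- (a) pointwise Gaussian linearization
  have ha : ∀ ω, ENNReal.ofReal (rexp (s * ∑ j, (Sc ω j) ^ 2))
      = ∫⁻ x : Fin d → ℝ, ∏ j, ENNReal.ofReal (rexp ((lam * Sc ω j) * x j)) ∂G := by
    intro ω
    have h1 : s * ∑ j, (Sc ω j) ^ 2 = ∑ j, (lam * Sc ω j) ^ 2 / 2 := by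
      rw [Finset.mul_sum]
      refine Finset.sum_congr rfl fun j _ => ?_
      rw [mul_pow, hlam2]; ring
    rw [h1, GB_ofReal_exp_sum]
    rw [GB_lintegral_pi_prod _ (fun j t => ENNReal.ofReal (rexp ((lam * Sc ω j) * t)))
      (fun j => by fun_prop)]
    exact Finset.prod_congr rfl fun j _ => (GB_lintegral_exp_mul_gauss _).symm
  -- (c) fixed-x bound over ω
  have hc : ∀ x : Fin d → ℝ, ∫⁻ ω, ∏ j, ENNReal.ofReal (rexp ((lam * Sc ω j) * x j)) ∂P
      ≤ ENNReal.ofReal (rexp (∑ j, (x j) ^ 2 / 4)) := by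
    intro x
    have hpt : ∀ ω, ∏ j, ENNReal.ofReal (rexp ((lam * Sc ω j) * x j))
        = ∏ i, ENNReal.ofReal (rexp (∑ j, lam * x j * clip (2 * ρ) (η i ω j))) := by
      intro ω
      rw [← GB_ofReal_exp_sum, ← GB_ofReal_exp_sum]
      congr 1
      congr 1
      have hj : ∀ j : Fin d, (lam * Sc ω j) * x j
          = ∑ i, lam * x j * clip (2 * ρ) (η i ω j) := by
        intro j
        rw [hScdef]
        simp only [Finset.mul_sum, Finset.sum_mul]
        exact Finset.sum_congr rfl fun i _ => by ring
      rw [Finset.sum_congr rfl fun j _ => hj j, Finset.sum_comm]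
    simp_rw [hpt]
    set F : Fin n → Ω → ℝ≥0∞ := fun i ω =>
      ENNReal.ofReal (rexp (∑ j, lam * x j * clip (2 * ρ) (η i ω j))) with hFdef
    have hFmeas : ∀ i, Measurable (F i) := by
      intro i
      apply Measurable.ennreal_ofReal
      apply Real.measurable_exp.comp
      exact Finset.measurable_sum _ fun j _ =>
        measurable_const.mul ((GB_measurable_clip (2 * ρ)).comp (hηij i j))
    have hFind : iIndepFun F P := by
      have := hind.comp (fun _ (v : EuclideanSpace ℝ (Fin d)) =>
        ENNReal.ofReal (rexp (∑ j, lam * x j * clip (2 * ρ) (v j))))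
        (fun _ => by
          apply Measurable.ennreal_ofReal
          apply Real.measurable_exp.comp
          exact Finset.measurable_sum _ fun j _ =>
            measurable_const.mul ((GB_measurable_clip (2 * ρ)).comp ((measurable_pi_apply j).comp (WithLp.measurable_ofLp 2 _))))
      exact this
    rw [GB_lintegral_prod_iIndep hFmeas hFind Finset.univ]
    set C : ℝ≥0∞ := ENNReal.ofReal (rexp (∑ j, lam ^ 2 * x j ^ 2 * (2 * ρ) ^ 2 / 2)) with hCdef
    have hCb : ∏ i : Fin n, ∫⁻ ω, F i ω ∂P ≤ C ^ n := by
      calc ∏ i : Fin n, ∫⁻ ω, F i ω ∂P ≤ ∏ _i : Fin n, C :=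
            Finset.prod_le_prod' fun i _ => GB_per_vector P hρ (η i) (hsp i) lam x
        _ = C ^ n := by rw [Finset.prod_const, Finset.card_univ, Fintype.card_fin]
    refine hCb.trans (le_of_eq ?_)
    have harg : (n:ℝ) * ∑ j, lam ^ 2 * x j ^ 2 * (2 * ρ) ^ 2 / 2 = ∑ j, (x j) ^ 2 / 4 := by
      rw [Finset.mul_sum]
      refine Finset.sum_congr rfl fun j _ => ?_
      rw [hlam2, hsdef]
      field_simp
      ring
    rw [hCdef, ← ENNReal.ofReal_pow (Real.exp_nonneg _), ← Real.exp_nat_mul, harg]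
  -- (b) swap and conclude
  have hswap : ∫⁻ ω, ∫⁻ x, ∏ j, ENNReal.ofReal (rexp ((lam * Sc ω j) * x j)) ∂G ∂P
      = ∫⁻ x, ∫⁻ ω, ∏ j, ENNReal.ofReal (rexp ((lam * Sc ω j) * x j)) ∂P ∂G := by
    apply lintegral_lintegral_swap
    apply Measurable.aemeasurable
    apply Finset.measurable_prod
    intro j _
    apply Measurable.ennreal_ofReal
    apply Real.measurable_exp.comp
    exact (((hmeasScj j).comp measurable_fst).const_mul lam).mul
      ((measurable_pi_apply j).comp measurable_snd)
  calc ∫⁻ ω, ENNReal.ofReal (rexp (s * ∑ j, (Sc ω j) ^ 2)) ∂P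
      = ∫⁻ ω, ∫⁻ x, ∏ j, ENNReal.ofReal (rexp ((lam * Sc ω j) * x j)) ∂G ∂P := by
        exact lintegral_congr fun ω => ha ω
    _ = ∫⁻ x, ∫⁻ ω, ∏ j, ENNReal.ofReal (rexp ((lam * Sc ω j) * x j)) ∂P ∂G := hswap
    _ ≤ ∫⁻ x, ENNReal.ofReal (rexp (∑ j, (x j) ^ 2 / 4)) ∂G := lintegral_mono fun x => hc x
    _ = ENNReal.ofReal (Real.sqrt 2 ^ d) := by
        have : ∀ x : Fin d → ℝ, ENNReal.ofReal (rexp (∑ j, (x j) ^ 2 / 4))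
            = ∏ j : Fin d, ENNReal.ofReal (rexp ((x j) ^ 2 / 4)) :=
          fun x => GB_ofReal_exp_sum Finset.univ _
        simp_rw [this]
        rw [GB_lintegral_pi_prod _ (fun _ t => ENNReal.ofReal (rexp (t ^ 2 / 4)))
          (fun _ => by fun_prop)]
        simp_rw [GB_lintegral_exp_sq_quarter_gauss]
        rw [Finset.prod_const, Finset.card_univ, Fintype.card_fin,
          ENNReal.ofReal_pow (Real.sqrt_nonneg 2)]


/-- concentration of the average clipped noise. -/
theorem gradient_bound_semiProduct
    {d n : ℕ} {Ω : Type*} [MeasurableSpace Ω] (P : Measure Ω) [IsProbabilityMeasure P]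
    (α ρ : ℝ) (hα : 0 < α) (hρ : 0 < ρ)
    (η : Fin n → Ω → EuclideanSpace ℝ (Fin d))
    (hiid : IsIIDSemiProduct P α ρ η)
    (δ : ℝ) (hδ : δ ∈ Set.Ioo (0 : ℝ) 1) :
    ENNReal.ofReal (1 - δ) ≤
      P {ω | ‖(n : ℝ)⁻¹ • ∑ i, clipVec (2 * ρ) (η i ω)‖ ≤
        10 * ρ * Real.sqrt ((d + Real.log (1 / δ)) / n)} := by
  classical
  obtain ⟨hδ0, hδ1⟩ := hδ
  obtain ⟨hind, hsp, _hid⟩ := hiid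
  rcases Nat.eq_zero_or_pos n with hn0 | hn
  · subst hn0
    have hall : ∀ ω : Ω, ‖((0:ℕ) : ℝ)⁻¹ • ∑ i : Fin 0, clipVec (2 * ρ) (η i ω)‖ ≤
        10 * ρ * Real.sqrt ((d + Real.log (1 / δ)) / (0:ℕ)) := by
      intro ω
      rw [Finset.univ_eq_empty, Finset.sum_empty, smul_zero, norm_zero]
      positivity
    have hset : {ω : Ω | ‖((0:ℕ) : ℝ)⁻¹ • ∑ i : Fin 0, clipVec (2 * ρ) (η i ω)‖ ≤
        10 * ρ * Real.sqrt ((d + Real.log (1 / δ)) / (0:ℕ))} = Set.univ :=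
      Set.eq_univ_of_forall hall
    rw [hset, measure_univ]
    exact ENNReal.ofReal_le_one.mpr (by linarith)
  · have hn' : (0:ℝ) < n := by exact_mod_cast hn
    set L := Real.log (1 / δ) with hLdef
    have hL : 0 ≤ L := Real.log_nonneg (by rw [le_div_iff₀ hδ0]; linarith)
    set B := 10 * ρ * Real.sqrt ((d + L) / n) with hBdef
    have hB : 0 ≤ B := by positivity
    set u := (n : ℝ) * B with hudef
    have hu : 0 ≤ u := by positivity
    set N : Ω → ℝ := fun ω => Real.sqrt (∑ j, (∑ i, clip (2 * ρ) (η i ω j)) ^ 2) with hNdef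
    have hmeasN : Measurable N := by
      apply Measurable.sqrt
      exact Finset.measurable_sum _ fun j _ => (Finset.measurable_sum _ fun i _ =>
        (GB_measurable_clip _).comp ((measurable_pi_apply j).comp ((WithLp.measurable_ofLp 2 _).comp (hsp i).meas))).pow_const 2
    have hNsq : ∀ ω, N ω ^ 2 = ∑ j, (∑ i, clip (2 * ρ) (η i ω j)) ^ 2 := fun ω =>
      Real.sq_sqrt (Finset.sum_nonneg fun j _ => sq_nonneg _)
    have hNnonneg : ∀ ω, 0 ≤ N ω := fun ω => Real.sqrt_nonneg _
    have hnorm : ∀ ω, ‖∑ i, clipVec (2 * ρ) (η i ω)‖ = N ω := by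
      intro ω
      rw [EuclideanSpace.norm_eq, hNdef]
      congr 1
      refine Finset.sum_congr rfl fun j _ => ?_
      rw [Real.norm_eq_abs, sq_abs]
      congr 1
      rw [WithLp.ofLp_sum, Finset.sum_apply]
      rfl
    have hsetEq : {ω | ‖(n : ℝ)⁻¹ • ∑ i, clipVec (2 * ρ) (η i ω)‖ ≤ B} = {ω | N ω ≤ u} := by
      ext ω
      simp only [Set.mem_setOf_eq]
      rw [norm_smul, Real.norm_eq_abs, abs_of_nonneg (inv_nonneg.mpr hn'.le), hnorm ω, hudef]
      exact inv_mul_le_iff₀ hn'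
    rw [hsetEq]
    have hmgf := GB_main_mgf P hρ η hind hsp hn
    have hfmeas : Measurable fun ω => ENNReal.ofReal (rexp ((16 * n * ρ ^ 2)⁻¹ *
        ∑ j, (∑ i, clip (2 * ρ) (η i ω j)) ^ 2)) := by
      apply Measurable.ennreal_ofReal
      apply Real.measurable_exp.comp
      apply Measurable.const_mul
      exact Finset.measurable_sum _ fun j _ => (Finset.measurable_sum _ fun i _ =>
        (GB_measurable_clip _).comp ((measurable_pi_apply j).comp ((WithLp.measurable_ofLp 2 _).comp (hsp i).meas))).pow_const 2
    have hmark : ENNReal.ofReal (rexp ((16 * n * ρ ^ 2)⁻¹ * u ^ 2)) * P {ω | u < N ω}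
        ≤ ENNReal.ofReal (Real.sqrt 2 ^ d) := by
      refine le_trans ?_ hmgf
      have hsub : {ω | u < N ω} ⊆ {ω | ENNReal.ofReal (rexp ((16 * n * ρ ^ 2)⁻¹ * u ^ 2))
          ≤ ENNReal.ofReal (rexp ((16 * n * ρ ^ 2)⁻¹ *
            ∑ j, (∑ i, clip (2 * ρ) (η i ω j)) ^ 2))} := by
        intro ω hω
        simp only [Set.mem_setOf_eq] at hω ⊢
        apply ENNReal.ofReal_le_ofReal
        apply Real.exp_le_exp.mpr
        apply mul_le_mul_of_nonneg_left _ (by positivity)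
        rw [← hNsq ω]
        exact pow_le_pow_left₀ hu hω.le 2
      calc ENNReal.ofReal (rexp ((16 * n * ρ ^ 2)⁻¹ * u ^ 2)) * P {ω | u < N ω}
          ≤ ENNReal.ofReal (rexp ((16 * n * ρ ^ 2)⁻¹ * u ^ 2)) *
            P {ω | ENNReal.ofReal (rexp ((16 * n * ρ ^ 2)⁻¹ * u ^ 2))
              ≤ ENNReal.ofReal (rexp ((16 * n * ρ ^ 2)⁻¹ *
                ∑ j, (∑ i, clip (2 * ρ) (η i ω j)) ^ 2))} :=
            mul_le_mul_right (measure_mono hsub) _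
        _ ≤ _ := mul_meas_ge_le_lintegral hfmeas _
    have hkey : (Real.sqrt 2 : ℝ) ^ d ≤ rexp ((16 * n * ρ ^ 2)⁻¹ * u ^ 2) * δ := by
      have hsu : (16 * (n:ℝ) * ρ ^ 2)⁻¹ * u ^ 2 = 25 * (d + L) / 4 := by
        rw [hudef, hBdef, mul_pow, mul_pow, mul_pow, Real.sq_sqrt (by positivity)]
        field_simp
        ring
      have h2d : (Real.sqrt 2 : ℝ) ^ d = rexp (d * (Real.log 2 / 2)) := by
        rw [← Real.log_sqrt (by norm_num), Real.exp_nat_mul,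
          Real.exp_log (Real.sqrt_pos.mpr two_pos)]
      have hδexp : δ = rexp (-L) := by
        rw [hLdef, one_div, Real.log_inv, neg_neg, Real.exp_log hδ0]
      rw [h2d, hsu, hδexp, ← Real.exp_add]
      apply Real.exp_le_exp.mpr
      have hlog2 : Real.log 2 ≤ 1 := by
        have := Real.log_le_sub_one_of_pos (two_pos (α := ℝ))
        linarith
      have hd0 : (0:ℝ) ≤ d := Nat.cast_nonneg d
      nlinarith
    have hPlt : P {ω | u < N ω} ≤ ENNReal.ofReal δ := by
      have h1 : ENNReal.ofReal (rexp ((16 * n * ρ ^ 2)⁻¹ * u ^ 2)) * P {ω | u < N ω}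
          ≤ ENNReal.ofReal (rexp ((16 * n * ρ ^ 2)⁻¹ * u ^ 2)) * ENNReal.ofReal δ := by
        refine hmark.trans ?_
        rw [← ENNReal.ofReal_mul (Real.exp_nonneg _)]
        exact ENNReal.ofReal_le_ofReal hkey
      exact (ENNReal.mul_le_mul_iff_right (ENNReal.ofReal_pos.mpr (Real.exp_pos _)).ne'
        ENNReal.ofReal_ne_top).mp h1
    have hms : MeasurableSet {ω | N ω ≤ u} := measurableSet_le hmeasN measurable_const
    have hsum1 : P {ω | N ω ≤ u} + P {ω | u < N ω} = 1 := by
      have hc : {ω | N ω ≤ u}ᶜ = {ω | u < N ω} := by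
        ext ω; simp [not_le]
      rw [← hc, measure_add_measure_compl hms, measure_univ]
    have hfin : ENNReal.ofReal (1 - δ) + ENNReal.ofReal δ
        ≤ P {ω | N ω ≤ u} + ENNReal.ofReal δ := by
      rw [← ENNReal.ofReal_add (by linarith) hδ0.le]
      have : (1 - δ + δ : ℝ) = 1 := by ring
      rw [this, ENNReal.ofReal_one, ← hsum1]
      exact add_le_add_right hPlt _
    exact (ENNReal.add_le_add_iff_right ENNReal.ofReal_ne_top).mp hfin


end
end

section
/- There exist absolute constants c, C > 0 such that the following holds. Let d ≥ 100, ρ > 0, α ∈ (0,1), ε > 0 with ε ≤ c·α, and μ* ∈ ℝ^d. Let Σ be a d×d positive semidefinite matrix with Tr(Σ) = d, and let η*_1, …, η*_n be i.i.d. copies of R·Σ^{1/2}·U, where U is uniformly distributed on the unit sphere of ℝ^d and R is a positive random variable independent of U with P(R ≤ ρ·√d) ≥ α. Let F(x) = Φ_h(‖x‖) with h = 20·ρ·√d. Then with probability at least 1 − exp(−c·α·n) over the samples: for every ε-corruption y_1, …, y_n of μ* + η*_1, …, μ* + η*_n, every w ∈ W_{2ε}, and every u ∈ ℝ^d with ‖u‖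 ≤ ρ·√d, one has L^w(μ* + u) − L^w(μ*) − ⟨∇L^w(μ*), u⟩ ≥ (α/4)·‖u‖². -/
open MeasureTheory ProbabilityTheory Real
open scoped BigOperators ENNReal NNReal Classical

noncomputable section

lemma huber_of_le {h t : ℝ} (ht : 0 ≤ t) (h1 : t ≤ h) : huber h t = t ^ 2 / 2 := by
  simp [huber, abs_of_nonneg ht, h1]

lemma huber_of_gt {h t : ℝ} (ht : 0 ≤ t) (h1 : h < t) : huber h t = h * t - h ^ 2 / 2 := by
  simp [huber, abs_of_nonneg ht, not_le.mpr h1]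

lemma huber_scalar_ge {h s t : ℝ} (hh : 0 < h) (hs0 : 0 ≤ s) (hs : s ≤ h) (ht : 0 ≤ t) :
    s * t - s ^ 2 / 2 ≤ huber h t := by
  rcases le_or_gt t h with h1 | h1
  · rw [huber_of_le ht h1]; nlinarith [sq_nonneg (t - s)]
  · rw [huber_of_gt ht h1]; nlinarith [sq_nonneg (h - s), mul_nonneg (sub_nonneg.mpr hs) (sub_nonneg.mpr h1.le)]

lemma huber_ge {d : ℕ} {h : ℝ} (hh : 0 < h) (z x : EuclideanSpace ℝ (Fin d)) (hz : ‖z‖ ≤ h) :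
    (inner ℝ z x : ℝ) - ‖z‖ ^ 2 / 2 ≤ huber h ‖x‖ := by
  have h1 : (inner ℝ z x : ℝ) ≤ ‖z‖ * ‖x‖ := real_inner_le_norm z x
  have h2 := huber_scalar_ge (s := ‖z‖) (t := ‖x‖) hh (norm_nonneg z) hz (norm_nonneg x)
  linarith

lemma ballProj_norm_le {d : ℕ} {h : ℝ} (hh : 0 < h) (x : EuclideanSpace ℝ (Fin d)) :
    ‖ballProj h x‖ ≤ h := by
  rw [ballProj]
  split_ifs with h1
  · exact h1
  · rw [norm_smul, norm_div, Real.norm_eq_abs, Real.norm_eq_abs, abs_of_pos hh,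
      abs_of_pos ((hh.trans (not_le.mp h1)).trans_le le_rfl)]
    rw [div_mul_cancel₀]
    exact (norm_pos_iff.mpr (by rintro rfl; simp at h1; linarith)).ne'

lemma huber_eq_proj {d : ℕ} {h : ℝ} (hh : 0 < h) (x : EuclideanSpace ℝ (Fin d)) :
    huber h ‖x‖ = (inner ℝ (ballProj h x) x : ℝ) - ‖ballProj h x‖ ^ 2 / 2 := by
  rw [ballProj]
  split_ifs with h1
  · rw [huber_of_le (norm_nonneg x) h1, real_inner_self_eq_norm_sq]; ring
  · push_neg at h1
    have hx : (0:ℝ) < ‖x‖ := hh.trans h1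
    rw [huber_of_gt (norm_nonneg x) h1, real_inner_smul_left, real_inner_self_eq_norm_sq,
      norm_smul, norm_div, Real.norm_eq_abs, Real.norm_eq_abs, abs_of_pos hh, abs_of_pos hx,
      div_mul_cancel₀ _ hx.ne']
    field_simp

lemma breg_nonneg {d : ℕ} {h : ℝ} (hh : 0 < h) (a u : EuclideanSpace ℝ (Fin d)) :
    (inner ℝ (ballProj h a) u : ℝ) ≤ huber h ‖a + u‖ - huber h ‖a‖ := by
  have h1 := huber_ge hh (ballProj h a) (a + u) (ballProj_norm_le hh a)
  have h2 := huber_eq_proj hh a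
  rw [inner_add_right] at h1
  linarith

lemma breg_quad {d : ℕ} {h : ℝ} (hh : 0 < h) {a u : EuclideanSpace ℝ (Fin d)}
    (ha : ‖a‖ ≤ h) (hau : ‖a + u‖ ≤ h) :
    huber h ‖a + u‖ - huber h ‖a‖ - (inner ℝ (ballProj h a) u : ℝ) = ‖u‖ ^ 2 / 2 := by
  have hb : ballProj h a = a := if_pos ha
  rw [hb, huber_of_le (norm_nonneg _) hau, huber_of_le (norm_nonneg _) ha,
    norm_add_sq_real]
  ring

abbrev ES (d : ℕ) := EuclideanSpace ℝ (Fin d)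

variable {d : ℕ}

lemma abs_coord_le_norm (x : ES d) (k : Fin d) : |x k| ≤ ‖x‖ := by
  rw [EuclideanSpace.norm_eq]
  rw [← Real.sqrt_sq_eq_abs]
  apply Real.sqrt_le_sqrt
  rw [show (x k) ^ 2 = ‖x k‖ ^ 2 by rw [Real.norm_eq_abs, sq_abs]]
  exact Finset.single_le_sum (f := fun i => ‖x i‖ ^ 2) (fun i _ => sq_nonneg _) (Finset.mem_univ k)

lemma norm_sq_eq_sum (x : ES d) : ‖x‖ ^ 2 = ∑ i, (x i) ^ 2 := by
  rw [EuclideanSpace.norm_eq, Real.sq_sqrt (Finset.sum_nonneg fun i _ => sq_nonneg _)]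
  exact Finset.sum_congr rfl fun i _ => by rw [Real.norm_eq_abs, sq_abs]

lemma ae_norm_one (ν : Measure (ES d)) [IsProbabilityMeasure ν]
    (hsph : ν (Metric.sphere (0 : ES d) 1) = 1) : ∀ᵐ u ∂ν, ‖u‖ = 1 := by
  have hm : MeasurableSet (Metric.sphere (0 : ES d) 1) :=
    (Metric.isClosed_sphere).measurableSet
  have hc : ν (Metric.sphere (0 : ES d) 1)ᶜ = 0 := by
    rw [measure_compl hm (measure_ne_top _ _), hsph, measure_univ]
    simp
  have : ∀ᵐ u ∂ν, u ∈ Metric.sphere (0 : ES d) 1 := by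
    rw [MeasureTheory.ae_iff]
    exact hc
  filter_upwards [this] with u hu
  rwa [mem_sphere_zero_iff_norm] at hu

lemma continuous_coord (k : Fin d) : Continuous (fun u : ES d => u k) :=
  (continuous_apply k).comp (PiLp.continuous_ofLp 2 _)

lemma integrable_coord_mul (ν : Measure (ES d)) [IsProbabilityMeasure ν]
    (hsph : ν (Metric.sphere (0 : ES d) 1) = 1) (k l : Fin d) :
    Integrable (fun u : ES d => u k * u l) ν := by
  refine Integrable.mono' (integrable_const (1:ℝ))
    (((continuous_coord k).mul (continuous_coord l)).aestronglyMeasurable) ?_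
  filter_upwards [ae_norm_one ν hsph] with u hu
  rw [Real.norm_eq_abs, abs_mul]
  calc |u k| * |u l| ≤ ‖u‖ * ‖u‖ :=
        mul_le_mul (abs_coord_le_norm u k) (abs_coord_le_norm u l) (abs_nonneg _) (norm_nonneg _)
    _ = 1 := by rw [hu]; ring

lemma integral_isom (ν : Measure (ES d))
    (hinv : ∀ O : ES d ≃ₗᵢ[ℝ] ES d, ν.map O = ν)
    (O : ES d ≃ₗᵢ[ℝ] ES d) (f : ES d → ℝ) (hf : Continuous f) :
    ∫ u, f u ∂ν = ∫ u, f (O u) ∂ν := by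
  conv_lhs => rw [← hinv O]
  exact integral_map (O.continuous.measurable).aemeasurable hf.aestronglyMeasurable

lemma second_moment (ν : Measure (ES d)) [IsProbabilityMeasure ν] (hd : 0 < d)
    (hsph : ν (Metric.sphere (0 : ES d) 1) = 1)
    (hinv : ∀ O : ES d ≃ₗᵢ[ℝ] ES d, ν.map O = ν) (k l : Fin d) :
    ∫ u, u k * u l ∂ν = if k = l then 1 / (d:ℝ) else 0 := by
  rcases eq_or_ne k l with rfl | hkl
  · rw [if_pos rfl]
    have hdiag : ∀ k' : Fin d, ∫ u, u k' * u k' ∂ν = ∫ u, u k * u k ∂ν := by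
      intro k'
      set O : ES d ≃ₗᵢ[ℝ] ES d :=
        LinearIsometryEquiv.piLpCongrLeft 2 ℝ ℝ (Equiv.swap k k') with hO
      have happ : ∀ (v : ES d) (j : Fin d), O v j = v (Equiv.swap k k' j) := by
        intro v j
        rw [hO, LinearIsometryEquiv.piLpCongrLeft_apply]
        simp [Equiv.piCongrLeft', Equiv.symm_swap]
      have h1 := integral_isom ν hinv O (fun u => u k * u k)
        ((continuous_coord k).mul (continuous_coord k))
      have h2 : ∫ u, (O u) k * (O u) k ∂ν = ∫ u, u k' * u k' ∂ν := by
        refine integral_congr_ae (Filter.Eventually.of_forall fun v => ?_)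
        show O v k * O v k = v k' * v k'
        rw [happ v k, Equiv.swap_apply_left]
      exact (h1.trans h2).symm
    have hsum : ∑ k' : Fin d, ∫ u, u k' * u k' ∂ν = 1 := by
      rw [← integral_finset_sum _ (fun k' _ => integrable_coord_mul ν hsph k' k')]
      have : ∫ u, (∑ k' : Fin d, u k' * u k') ∂ν = ∫ u, (1:ℝ) ∂ν := by
        apply integral_congr_ae
        filter_upwards [ae_norm_one ν hsph] with u hu
        have h3 := norm_sq_eq_sum u
        rw [hu] at h3
        simp only [one_pow] at h3
        exact (Finset.sum_congr rfl fun i _ => (pow_two (u i)).symm).trans h3.symm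
      rw [this]
      simp
    have hdd : (d : ℝ) * ∫ u, u k * u k ∂ν = 1 := by
      rw [← hsum, Finset.sum_congr rfl (fun k' _ => hdiag k')]
      simp [Finset.sum_const, Finset.card_univ]
    have hdne : (d : ℝ) ≠ 0 := by positivity
    rw [eq_div_iff hdne]
    linear_combination hdd
  · rw [if_neg hkl]
    set O : ES d ≃ₗᵢ[ℝ] ES d :=
      LinearIsometryEquiv.piLpCongrRight 2
        (fun j => if j = k then LinearIsometryEquiv.neg ℝ else LinearIsometryEquiv.refl ℝ ℝ)
        with hO
    have happ : ∀ (v : ES d) (j : Fin d),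
        O v j = if j = k then -(v j) else v j := by
      intro v j
      rw [hO, LinearIsometryEquiv.piLpCongrRight_apply]
      by_cases hj : j = k
      · subst hj; simp
      · simp [hj]
    have h1 := integral_isom ν hinv O (fun u => u k * u l)
      ((continuous_coord k).mul (continuous_coord l))
    have h2 : ∫ u, (O u) k * (O u) l ∂ν = ∫ u, -(u k * u l) ∂ν := by
      refine integral_congr_ae (Filter.Eventually.of_forall fun v => ?_)
      show O v k * O v l = -(v k * v l)
      rw [happ v k, happ v l, if_pos rfl, if_neg hkl.symm]
      ring
    have h3 := (h1.trans h2).trans (integral_neg _)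
    linarith

lemma coordEL (A : Matrix (Fin d) (Fin d) ℝ) (u : ES d) (j : Fin d) :
    (Matrix.toEuclideanLin A) u j = ∑ k, A j k * u k := by
  rfl

lemma integral_norm_matrix_sq (ν : Measure (ES d)) [IsProbabilityMeasure ν] (hd : 0 < d)
    (hsph : ν (Metric.sphere (0 : ES d) 1) = 1)
    (hinv : ∀ O : ES d ≃ₗᵢ[ℝ] ES d, ν.map O = ν) (A : Matrix (Fin d) (Fin d) ℝ) :
    ∫ u, ‖(Matrix.toEuclideanLin A) u‖ ^ 2 ∂ν = (∑ j, ∑ k, A j k ^ 2) / d := by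
  have hpt : ∀ u : ES d, ‖(Matrix.toEuclideanLin A) u‖ ^ 2
      = ∑ j, ∑ k, ∑ l, (A j k * A j l) * (u k * u l) := by
    intro u
    rw [norm_sq_eq_sum]
    refine Finset.sum_congr rfl fun j _ => ?_
    rw [coordEL, pow_two, Finset.sum_mul_sum]
    exact Finset.sum_congr rfl fun k _ => Finset.sum_congr rfl fun l _ => by ring
  simp only [hpt]
  rw [integral_finset_sum _ (fun j _ => integrable_finset_sum _ fun k _ =>
    integrable_finset_sum _ fun l _ => (integrable_coord_mul ν hsph k l).const_mul _)]
  have : ∀ j, ∫ u, (∑ k, ∑ l, (A j k * A j l) * (u k * u l)) ∂ν = (∑ k, A j k ^ 2) / d := by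
    intro j
    rw [integral_finset_sum _ (fun k _ =>
      integrable_finset_sum _ fun l _ => (integrable_coord_mul ν hsph k l).const_mul _)]
    have h2 : ∀ k, ∫ u, (∑ l, (A j k * A j l) * (u k * u l)) ∂ν = A j k ^ 2 / d := by
      intro k
      rw [integral_finset_sum _ (fun l _ => (integrable_coord_mul ν hsph k l).const_mul _)]
      have h3 : ∀ l, ∫ u, (A j k * A j l) * (u k * u l) ∂ν
          = (A j k * A j l) * (if k = l then 1 / (d:ℝ) else 0) := by
        intro l
        rw [integral_const_mul, second_moment ν hd hsph hinv k l]
      simp only [h3]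
      rw [Finset.sum_eq_single k]
      · simp [pow_two]; ring
      · intro l _ hlk; simp [Ne.symm hlk]
      · intro hk; exact absurd (Finset.mem_univ k) hk
    simp only [h2]
    rw [← Finset.sum_div]
  simp only [this]
  rw [← Finset.sum_div]

lemma sphere_markov (ν : Measure (ES d)) [IsProbabilityMeasure ν] (hd : 0 < d)
    (hsph : ν (Metric.sphere (0 : ES d) 1) = 1)
    (hinv : ∀ O : ES d ≃ₗᵢ[ℝ] ES d, ν.map O = ν) (A : Matrix (Fin d) (Fin d) ℝ)
    (htr : ∑ j, ∑ k, A j k ^ 2 = d) :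
    ENNReal.ofReal (360 / 361) ≤ ν {u : ES d | ‖(Matrix.toEuclideanLin A) u‖ ≤ 19} := by
  set f : ES d → ℝ := fun u => ‖(Matrix.toEuclideanLin A) u‖ ^ 2 with hf
  have hcontM : Continuous (fun u : ES d => (Matrix.toEuclideanLin A) u) :=
    LinearMap.continuous_of_finiteDimensional _
  have hcont : Continuous f := (hcontM.norm).pow 2
  have hC : ∀ u : ES d, ‖u‖ = 1 → |f u| ≤ ∑ j, (∑ k, |A j k|) ^ 2 := by
    intro u hu
    rw [hf]
    simp only
    rw [abs_of_nonneg (by positivity), norm_sq_eq_sum]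
    refine Finset.sum_le_sum fun j _ => ?_
    rw [coordEL]
    have h1 : |∑ k, A j k * u k| ≤ ∑ k, |A j k| := by
      refine le_trans (Finset.abs_sum_le_sum_abs _ _) (Finset.sum_le_sum fun k _ => ?_)
      rw [abs_mul]
      calc |A j k| * |u k| ≤ |A j k| * 1 := by
            apply mul_le_mul_of_nonneg_left _ (abs_nonneg _)
            rw [← hu]; exact abs_coord_le_norm u k
        _ = |A j k| := mul_one _
    calc (∑ k, A j k * u k) ^ 2 = |∑ k, A j k * u k| ^ 2 := (sq_abs _).symm
      _ ≤ (∑ k, |A j k|) ^ 2 := by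
          apply pow_le_pow_left₀ (abs_nonneg _) h1
  have hint : Integrable f ν := by
    refine Integrable.mono' (integrable_const (∑ j, (∑ k : Fin d, |A j k|) ^ 2))
      hcont.aestronglyMeasurable ?_
    filter_upwards [ae_norm_one ν hsph] with u hu
    rw [Real.norm_eq_abs]
    exact hC u hu
  have hI : ∫ u, f u ∂ν = 1 := by
    rw [hf]
    rw [integral_norm_matrix_sq ν hd hsph hinv A, htr]
    field_simp
  have hmarkov := mul_meas_ge_le_integral_of_nonneg
    (Filter.Eventually.of_forall fun u => sq_nonneg _) hint (361 : ℝ)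
  rw [hI] at hmarkov
  have htail : ν {u : ES d | (361:ℝ) ≤ f u} ≤ ENNReal.ofReal (1 / 361) := by
    rw [ENNReal.le_ofReal_iff_toReal_le (measure_ne_top _ _) (by norm_num)]
    have hm' : 361 * (ν {u : ES d | (361:ℝ) ≤ f u}).toReal ≤ 1 := hmarkov
    nlinarith [ENNReal.toReal_nonneg (a := ν {u : ES d | (361:ℝ) ≤ f u})]
  have hsub : {u : ES d | ‖(Matrix.toEuclideanLin A) u‖ ≤ 19}ᶜ ⊆ {u : ES d | (361:ℝ) ≤ f u} := by
    intro u hu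
    simp only [Set.mem_compl_iff, Set.mem_setOf_eq, not_le] at hu
    simp only [Set.mem_setOf_eq, hf]
    nlinarith [norm_nonneg ((Matrix.toEuclideanLin A) u)]
  have hmeasS : MeasurableSet {u : ES d | ‖(Matrix.toEuclideanLin A) u‖ ≤ 19} :=
    (isClosed_le (hcontM.norm) continuous_const).measurableSet
  have h1 : ν {u : ES d | ‖(Matrix.toEuclideanLin A) u‖ ≤ 19}
      = 1 - ν {u : ES d | ‖(Matrix.toEuclideanLin A) u‖ ≤ 19}ᶜ := by
    have := prob_compl_eq_one_sub (μ := ν) hmeasS.compl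
    rwa [compl_compl] at this
  rw [h1]
  have h2 : ν {u : ES d | ‖(Matrix.toEuclideanLin A) u‖ ≤ 19}ᶜ ≤ ENNReal.ofReal (1 / 361) :=
    le_trans (measure_mono hsub) htail
  calc ENNReal.ofReal (360 / 361) ≤ 1 - ENNReal.ofReal (1 / 361) := by
        rw [show (360:ℝ)/361 = 1 - 1/361 by norm_num,
          ENNReal.ofReal_sub _ (by norm_num), ENNReal.ofReal_one]
    _ ≤ 1 - ν {u : ES d | ‖(Matrix.toEuclideanLin A) u‖ ≤ 19}ᶜ :=
        tsub_le_tsub_left h2 1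

lemma det_core {d n : ℕ} {ρ α ε : ℝ} (hρ : 0 < ρ) (hd : (1:ℝ) ≤ d) (hα : 0 < α)
    (hεα : ε ≤ α / 100)
    (μstar : EuclideanSpace ℝ (Fin d)) (η : Fin n → EuclideanSpace ℝ (Fin d))
    (hgood : 53 / 100 * α * n <
      ((Finset.univ.filter (fun i => ‖η i‖ ≤ 19 * (ρ * Real.sqrt d))).card : ℝ)) :
    ∀ y : Fin n → EuclideanSpace ℝ (Fin d),
      IsCorruption ε (fun i => μstar + η i) y →
      ∀ w ∈ weightSet n (2 * ε),
      ∀ u : EuclideanSpace ℝ (Fin d), ‖u‖ ≤ ρ * Real.sqrt d →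
        α / 4 * ‖u‖ ^ 2 ≤
          wLoss (fun x => huber (20 * ρ * Real.sqrt d) ‖x‖) y w (μstar + u) -
            wLoss (fun x => huber (20 * ρ * Real.sqrt d) ‖x‖) y w μstar -
            (inner ℝ (∑ i, w i • ballProj (20 * ρ * Real.sqrt d) (μstar - y i)) u : ℝ) := by
  intro y hcor w hw u hu
  set r : ℝ := ρ * Real.sqrt d with hr_def
  have hr : 0 < r := mul_pos hρ (Real.sqrt_pos.mpr (by linarith))
  have hh : 0 < 20 * ρ * Real.sqrt d := by positivity
  set h : ℝ := 20 * ρ * Real.sqrt d with hh_def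
  have hhr : h = 20 * r := by rw [hh_def, hr_def]; ring
  -- n positive
  have hcardn : ((Finset.univ.filter (fun i => ‖η i‖ ≤ 19 * r)).card : ℝ) ≤ n := by
    exact_mod_cast le_trans (Finset.card_filter_le _ _)
      (le_of_eq ((Finset.card_univ).trans (Fintype.card_fin n)))
  have hn : 0 < (n : ℝ) := lt_of_lt_of_le (lt_of_le_of_lt (by positivity) hgood) hcardn
  -- rewrite RHS as sum of Bregman terms
  set b : Fin n → EuclideanSpace ℝ (Fin d) := fun i => μstar - y i with hb_def
  set D : Fin n → ℝ := fun i =>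
    huber h ‖b i + u‖ - huber h ‖b i‖ - (inner ℝ (ballProj h (b i)) u : ℝ) with hD_def
  have hRHS : wLoss (fun x => huber h ‖x‖) y w (μstar + u) -
      wLoss (fun x => huber h ‖x‖) y w μstar -
      (inner ℝ (∑ i, w i • ballProj h (μstar - y i)) u : ℝ) = ∑ i, w i * D i := by
    rw [wLoss, wLoss, sum_inner]
    rw [← Finset.sum_sub_distrib, ← Finset.sum_sub_distrib]
    refine Finset.sum_congr rfl fun i _ => ?_
    rw [real_inner_smul_left, hD_def]
    have : μstar + u - y i = b i + u := by
      simp only [hb_def]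
      abel
    rw [this, hb_def]
    ring
  rw [hRHS]
  -- good and uncorrupted indices
  set Good : Finset (Fin n) := Finset.univ.filter (fun i => ‖η i‖ ≤ 19 * r) with hGood_def
  set B : Finset (Fin n) := Finset.univ.filter (fun i => y i ≠ μstar + η i) with hB_def
  set G : Finset (Fin n) := Good \ B with hG_def
  have hwpos : ∀ i, 0 ≤ w i := fun i => (hw.1 i).1
  have hDpos : ∀ i, 0 ≤ D i := fun i => by
    have := breg_nonneg hh (b i) u; rw [hD_def]; simp only; linarith
  -- on G, D i = ‖u‖^2/2
  have hDG : ∀ i ∈ G, D i = ‖u‖ ^ 2 / 2 := by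
    intro i hi
    rw [hG_def, Finset.mem_sdiff, hGood_def, Finset.mem_filter, hB_def, Finset.mem_filter] at hi
    have hyi : y i = μstar + η i := by
      by_contra hne; exact hi.2 ⟨Finset.mem_univ i, hne⟩
    have hbi : b i = -η i := by rw [hb_def]; simp only; rw [hyi]; abel
    have h1 : ‖b i‖ ≤ h := by rw [hbi, norm_neg, hhr]; linarith [hi.1.2]
    have h2 : ‖b i + u‖ ≤ h := by
      calc ‖b i + u‖ ≤ ‖b i‖ + ‖u‖ := norm_add_le _ _
        _ ≤ 19 * r + r := by rw [hbi, norm_neg]; exact add_le_add hi.1.2 hu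
        _ = 20 * r := by ring
        _ = h := hhr.symm
    rw [hD_def]; exact breg_quad hh h1 h2
  -- lower bound the sum by the G part
  have hstep1 : ∑ i ∈ G, w i * D i ≤ ∑ i, w i * D i := by
    apply Finset.sum_le_sum_of_subset_of_nonneg (Finset.subset_univ G)
    intro i _ _; exact mul_nonneg (hwpos i) (hDpos i)
  have hstep2 : ∑ i ∈ G, w i * D i = (∑ i ∈ G, w i) * (‖u‖ ^ 2 / 2) := by
    rw [Finset.sum_mul]
    exact Finset.sum_congr rfl fun i hi => by rw [hDG i hi]
  -- card bounds
  have hBcard : (B.card : ℝ) ≤ ε * n := by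
    have : ({i : Fin n | y i ≠ (fun i => μstar + η i) i}).ncard = B.card := by
      rw [Set.ncard_eq_toFinset_card', Set.toFinset_setOf]
    have := hcor
    rw [IsCorruption] at this
    rw [hB_def]
    calc ((Finset.univ.filter (fun i => y i ≠ μstar + η i)).card : ℝ)
        = (({i : Fin n | y i ≠ (fun i => μstar + η i) i}).ncard : ℝ) := by
          rw [Set.ncard_eq_toFinset_card', Set.toFinset_setOf]
      _ ≤ ε * n := this
  have hGcard : (Good.card : ℝ) - ε * n ≤ (G.card : ℝ) := by
    have h1 : Good.card ≤ (Good \ B).card + B.card := Finset.card_le_card_sdiff_add_card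
    have h2 : ((Good \ B).card : ℝ) + (B.card : ℝ) ≥ (Good.card : ℝ) := by exact_mod_cast h1
    rw [hG_def]; linarith
  -- weight bound on G
  have hwG : α / 2 ≤ ∑ i ∈ G, w i := by
    have h1 : ∀ i ∈ G, 1 / (n : ℝ) - |w i - 1 / n| ≤ w i := by
      intro i _
      have := neg_abs_le (w i - 1 / (n:ℝ))
      linarith
    have h2 : ∑ i ∈ G, |w i - 1 / (n:ℝ)| ≤ 2 * ε := by
      refine le_trans (Finset.sum_le_sum_of_subset_of_nonneg (Finset.subset_univ G)
        fun i _ _ => abs_nonneg _) hw.2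
    have h3 : ∑ i ∈ G, (1 / (n : ℝ) - |w i - 1 / n|) ≤ ∑ i ∈ G, w i :=
      Finset.sum_le_sum h1
    rw [Finset.sum_sub_distrib, Finset.sum_const, nsmul_eq_mul] at h3
    have h4 : (G.card : ℝ) * (1 / n) ≥ (53 / 100 * α * n - ε * n) * (1 / n) := by
      apply mul_le_mul_of_nonneg_right _ (by positivity)
      calc 53 / 100 * α * n - ε * n ≤ (Good.card : ℝ) - ε * n := by
            rw [hGood_def]; rw [hr_def] at *; linarith [hgood]
        _ ≤ (G.card : ℝ) := hGcard
    have h5 : (53 / 100 * α * n - ε * n) * (1 / n) = 53 / 100 * α - ε := by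
      field_simp
    rw [h5] at h4
    linarith
  calc α / 4 * ‖u‖ ^ 2 = (α / 2) * (‖u‖ ^ 2 / 2) := by ring
    _ ≤ (∑ i ∈ G, w i) * (‖u‖ ^ 2 / 2) := by
        apply mul_le_mul_of_nonneg_right hwG (by positivity)
    _ = ∑ i ∈ G, w i * D i := hstep2.symm
    _ ≤ ∑ i, w i * D i := hstep1

lemma mgf_bernoulli {Ω : Type} [MeasurableSpace Ω] (P : Measure Ω) [IsProbabilityMeasure P]
    (X : Ω → ℝ) (hX : Measurable X) (hval : ∀ ω, X ω = 0 ∨ X ω = 1)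
    {p : ℝ} (hp0 : 0 ≤ p) (hp : ENNReal.ofReal p ≤ P {ω | X ω = 1}) :
    mgf X P (-1) ≤ Real.exp (-(1 - Real.exp (-1)) * p) := by
  have hXint : Integrable X P := by
    refine Integrable.mono' (integrable_const (1:ℝ)) hX.aestronglyMeasurable ?_
    refine Filter.Eventually.of_forall fun ω => ?_
    rcases hval ω with h | h <;> rw [Real.norm_eq_abs, h] <;> norm_num
  have hfun : ∀ ω, Real.exp (-1 * X ω) = 1 - (1 - Real.exp (-1)) * X ω := by
    intro ω
    rcases hval ω with h | h <;> rw [h] <;> simp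
  have hmgf : mgf X P (-1) = 1 - (1 - Real.exp (-1)) * ∫ ω, X ω ∂P := by
    rw [mgf]
    simp only [hfun]
    rw [integral_sub (integrable_const 1) (hXint.const_mul _), integral_const,
      integral_const_mul]
    simp
  have hEX : ∫ ω, X ω ∂P = (P {ω | X ω = 1}).toReal := by
    have hset : MeasurableSet {ω | X ω = 1} := hX (measurableSet_singleton 1)
    have : ∀ ω, X ω = Set.indicator {ω | X ω = 1} (fun _ => (1:ℝ)) ω := by
      intro ω
      rcases hval ω with h | h
      · rw [h, Set.indicator_of_notMem]
        simp [Set.mem_setOf_eq, h]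
      · rw [h, Set.indicator_of_mem]
        exact h
    calc ∫ ω, X ω ∂P = ∫ ω, Set.indicator {ω | X ω = 1} (fun _ => (1:ℝ)) ω ∂P :=
          integral_congr_ae (Filter.Eventually.of_forall this)
      _ = (P {ω | X ω = 1}).toReal := by
          rw [integral_indicator_const _ hset]; simp [measureReal_def]
  have hq : p ≤ (P {ω | X ω = 1}).toReal := by
    have := ENNReal.toReal_mono (measure_ne_top _ _) hp
    rwa [ENNReal.toReal_ofReal hp0] at this
  rw [hmgf, hEX]
  have he : 0 ≤ 1 - Real.exp (-1) := by
    have : Real.exp (-1) ≤ 1 := by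
      rw [Real.exp_le_one_iff]; norm_num
    linarith
  calc 1 - (1 - Real.exp (-1)) * (P {ω | X ω = 1}).toReal
      ≤ 1 - (1 - Real.exp (-1)) * p := by nlinarith
    _ ≤ Real.exp (-(1 - Real.exp (-1)) * p) := by
        have := Real.add_one_le_exp (-(1 - Real.exp (-1)) * p)
        linarith

lemma chernoff_binom {Ω : Type} [MeasurableSpace Ω] (P : Measure Ω) [IsProbabilityMeasure P]
    {n : ℕ} (X : Fin n → Ω → ℝ) (hmeas : ∀ i, Measurable (X i))
    (hindep : iIndepFun X P)
    (hval : ∀ i ω, X i ω = 0 ∨ X i ω = 1)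
    {p : ℝ} (hp0 : 0 ≤ p) (hp : ∀ i, ENNReal.ofReal p ≤ P {ω | X i ω = 1})
    (β : ℝ) :
    (P {ω | ∑ i, X i ω ≤ β * n}).toReal ≤
      Real.exp (β * n - (1 - Real.exp (-1)) * p * n) := by
  have hSmeas : Measurable (∑ i, X i) := by
    have := Finset.measurable_sum (Finset.univ) fun i (_ : i ∈ Finset.univ) => hmeas i
    convert this using 1
    funext ω
    simp [Finset.sum_apply]
  have hSnonneg : ∀ ω, 0 ≤ (∑ i, X i) ω := by
    intro ω
    rw [Finset.sum_apply]
    refine Finset.sum_nonneg fun i _ => ?_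
    rcases hval i ω with h | h <;> rw [h] <;> norm_num
  have hint : Integrable (fun ω => Real.exp (-1 * (∑ i, X i) ω)) P := by
    refine Integrable.mono' (integrable_const (1:ℝ))
      (((hSmeas.const_mul (-1)).exp).aestronglyMeasurable) ?_
    refine Filter.Eventually.of_forall fun ω => ?_
    rw [Real.norm_eq_abs, abs_of_pos (Real.exp_pos _), Real.exp_le_one_iff]
    nlinarith [hSnonneg ω]
  have hchern := measure_le_le_exp_mul_mgf (μ := P) (X := ∑ i, X i) (β * n)
    (by norm_num : (-1:ℝ) ≤ 0) hint
  have hmgfsum : mgf (∑ i, X i) P (-1) = ∏ i, mgf (X i) P (-1) :=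
    hindep.mgf_sum hmeas Finset.univ
  have hprod : ∏ i, mgf (X i) P (-1) ≤ Real.exp (-(1 - Real.exp (-1)) * p * n) := by
    calc ∏ i, mgf (X i) P (-1) ≤ ∏ _i : Fin n, Real.exp (-(1 - Real.exp (-1)) * p) := by
          refine Finset.prod_le_prod (fun i _ => mgf_nonneg) fun i _ =>
            mgf_bernoulli P (X i) (hmeas i) (hval i) hp0 (hp i)
      _ = Real.exp (-(1 - Real.exp (-1)) * p * n) := by
          rw [Finset.prod_const, ← Real.exp_nat_mul, Finset.card_univ, Fintype.card_fin]
          ring_nf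
  have hseteq : {ω | (∑ i, X i) ω ≤ β * n} = {ω | ∑ i, X i ω ≤ β * n} := by
    ext ω; simp [Finset.sum_apply]
  rw [hseteq] at hchern
  calc (P {ω | ∑ i, X i ω ≤ β * n}).toReal
      ≤ Real.exp (-(-1) * (β * n)) * mgf (∑ i, X i) P (-1) := hchern
    _ ≤ Real.exp (-(-1) * (β * n)) * Real.exp (-(1 - Real.exp (-1)) * p * n) := by
        rw [hmgfsum]
        exact mul_le_mul_of_nonneg_left hprod (Real.exp_pos _).le
    _ = Real.exp (β * n - (1 - Real.exp (-1)) * p * n) := by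
        rw [← Real.exp_add]; ring_nf

lemma iIndepFun_congr_ae {Ω : Type} [MeasurableSpace Ω] {P : Measure Ω}
    {n : ℕ} {β : Type*} [MeasurableSpace β] {X Y : Fin n → Ω → β}
    (h : iIndepFun X P)
    (heq : ∀ i, X i =ᵐ[P] Y i) :
    iIndepFun Y P := by
  rw [iIndepFun_iff_measure_inter_preimage_eq_mul] at h ⊢
  intro s sets hsets
  have h1 : ∀ i ∈ s, P (Y i ⁻¹' sets i) = P (X i ⁻¹' sets i) := by
    intro i _
    refine measure_congr ?_
    filter_upwards [heq i] with ω hω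
    show (Y i ω ∈ sets i) = (X i ω ∈ sets i)
    rw [hω]
  have h2 : P (⋂ i ∈ s, Y i ⁻¹' sets i) = P (⋂ i ∈ s, X i ⁻¹' sets i) := by
    refine measure_congr ?_
    filter_upwards [MeasureTheory.ae_all_iff.mpr heq] with ω hω
    show (ω ∈ ⋂ i ∈ s, Y i ⁻¹' sets i) = (ω ∈ ⋂ i ∈ s, X i ⁻¹' sets i)
    simp only [Set.mem_iInter, Set.mem_preimage]
    refine eq_iff_iff.mpr ⟨fun hall j hj => ?_, fun hall j hj => ?_⟩
    · rw [hω j]; exact hall j hj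
    · rw [← hω j]; exact hall j hj
  rw [h2, h s hsets]
  exact Finset.prod_congr rfl fun i hi => (h1 i hi).symm

lemma sqrt_facts (d : ℕ) (S : Matrix (Fin d) (Fin d) ℝ) (hS : S.PosSemidef) :
    ((hS.1.eigenvectorUnitary : Matrix (Fin d) (Fin d) ℝ) *
          Matrix.diagonal ((↑) ∘ (√·) ∘ hS.1.eigenvalues) *
          (star hS.1.eigenvectorUnitary : Matrix (Fin d) (Fin d) ℝ)) *
      ((hS.1.eigenvectorUnitary : Matrix (Fin d) (Fin d) ℝ) *
          Matrix.diagonal ((↑) ∘ (√·) ∘ hS.1.eigenvalues) *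
          (star hS.1.eigenvectorUnitary : Matrix (Fin d) (Fin d) ℝ)) = S ∧
    Matrix.conjTranspose ((hS.1.eigenvectorUnitary : Matrix (Fin d) (Fin d) ℝ) *
          Matrix.diagonal ((↑) ∘ (√·) ∘ hS.1.eigenvalues) *
          (star hS.1.eigenvectorUnitary : Matrix (Fin d) (Fin d) ℝ)) =
      ((hS.1.eigenvectorUnitary : Matrix (Fin d) (Fin d) ℝ) *
          Matrix.diagonal ((↑) ∘ (√·) ∘ hS.1.eigenvalues) *
          (star hS.1.eigenvectorUnitary : Matrix (Fin d) (Fin d) ℝ)) := by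
  have hU := Unitary.coe_star_mul_self hS.1.eigenvectorUnitary
  set V : Matrix (Fin d) (Fin d) ℝ := (hS.1.eigenvectorUnitary : Matrix (Fin d) (Fin d) ℝ) with hV
  set D : Matrix (Fin d) (Fin d) ℝ := Matrix.diagonal ((↑) ∘ (√·) ∘ hS.1.eigenvalues) with hDd
  have hD : D * D = Matrix.diagonal (RCLike.ofReal ∘ hS.1.eigenvalues : Fin d → ℝ) := by
    rw [hDd, Matrix.diagonal_mul_diagonal]
    congr 1; funext i
    simp [Real.mul_self_sqrt (hS.eigenvalues_nonneg i)]
  constructor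
  · conv_rhs => rw [hS.1.spectral_theorem]
    rw [Unitary.conjStarAlgAut_apply, ← hV, ← hD]
    calc V * D * star V * (V * D * star V) = V * D * (star V * V) * D * star V := by
          simp only [Matrix.mul_assoc]
      _ = _ := by rw [hU, Matrix.mul_one, Matrix.mul_assoc V D D]
  · rw [Matrix.star_eq_conjTranspose, Matrix.conjTranspose_mul, Matrix.conjTranspose_mul,
      Matrix.conjTranspose_conjTranspose, hDd, Matrix.diagonal_conjTranspose, star_trivial,
      Matrix.mul_assoc]

/-- local strong convexity of the radial Huber loss for elliptical
distributions. -/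
theorem local_strong_convexity_elliptical :
    ∃ c C : ℝ, 0 < c ∧ 0 < C ∧
      ∀ (d n : ℕ), 100 ≤ d →
      ∀ (Ω : Type) (_ : MeasurableSpace Ω) (P : Measure Ω), IsProbabilityMeasure P →
      ∀ (ρ α ε : ℝ), 0 < ρ → α ∈ Set.Ioo (0 : ℝ) 1 → 0 < ε → ε ≤ c * α →
      ∀ μstar : EuclideanSpace ℝ (Fin d),
      ∀ (S : Matrix (Fin d) (Fin d) ℝ) (hS : S.PosSemidef), S.trace = d →
      ∀ (R : Ω → ℝ) (U : Ω → EuclideanSpace ℝ (Fin d)),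
        (∀ ω, 0 < R ω) →
        IsUniformOnSphere (Measure.map U P) →
        IndepFun R U P →
        ENNReal.ofReal α ≤ P {ω | R ω ≤ ρ * Real.sqrt d} →
      ∀ η : Fin n → Ω → EuclideanSpace ℝ (Fin d),
        iIndepFun η P →
        (∀ i, IdentDistrib (η i) (ellSample ((hS.1.eigenvectorUnitary : Matrix (Fin d) (Fin d) ℝ) *
          Matrix.diagonal ((↑) ∘ (√·) ∘ hS.1.eigenvalues) *
          (star hS.1.eigenvectorUnitary : Matrix (Fin d) (Fin d) ℝ)) R U) P P) →
        ENNReal.ofReal (1 - Real.exp (-(c * α * n))) ≤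
          P {ω | ∀ y : Fin n → EuclideanSpace ℝ (Fin d),
            IsCorruption ε (fun i => μstar + η i ω) y →
            ∀ w ∈ weightSet n (2 * ε),
            ∀ u : EuclideanSpace ℝ (Fin d), ‖u‖ ≤ ρ * Real.sqrt d →
              α / 4 * ‖u‖ ^ 2 ≤
                wLoss (fun x => huber (20 * ρ * Real.sqrt d) ‖x‖) y w (μstar + u) -
                  wLoss (fun x => huber (20 * ρ * Real.sqrt d) ‖x‖) y w μstar -
                  (inner ℝ (∑ i, w i • ballProj (20 * ρ * Real.sqrt d) (μstar - y i)) u : ℝ)} := by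
  classical
  refine ⟨1/100, 1, by norm_num, by norm_num, ?_⟩
  intro d n hd Ω mΩ P hP ρ α ε hρ hα hε hεc μstar S hS htr R U hRpos hUsph hRU hRprob η hηindep hηid
  haveI := hP
  obtain ⟨hνprob, hsph, hinv⟩ := hUsph
  haveI := hνprob
  have hd1 : (1:ℝ) ≤ (d:ℝ) := by
    have : (100:ℝ) ≤ (d:ℝ) := by exact_mod_cast hd
    linarith
  have hdpos : 0 < d := lt_of_lt_of_le (by norm_num) hd
  have hdR : (0:ℝ) < (d:ℝ) := by exact_mod_cast hdpos
  set A : Matrix (Fin d) (Fin d) ℝ := (hS.1.eigenvectorUnitary : Matrix (Fin d) (Fin d) ℝ) *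
          Matrix.diagonal ((↑) ∘ (√·) ∘ hS.1.eigenvalues) *
          (star hS.1.eigenvectorUnitary : Matrix (Fin d) (Fin d) ℝ) with hA
  set r : ℝ := ρ * Real.sqrt d with hrdef
  have hrpos : 0 < r := mul_pos hρ (Real.sqrt_pos.mpr hdR)
  -- U is a.e.-measurable
  have hUae : AEMeasurable U P := by
    by_contra hcon
    have h1 : (Measure.map U P) Set.univ = 1 := measure_univ
    rw [Measure.map_of_not_aemeasurable hcon] at h1
    simp at h1
  -- sum of squares of A equals d
  have hsym : ∀ j k, A j k = A k j := by
    intro j k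
    have h : Matrix.conjTranspose A = A := (sqrt_facts d S hS).2
    have h2 := congrFun (congrFun h.symm j) k
    rw [Matrix.conjTranspose_apply, star_trivial] at h2
    exact h2
  have hAsum : ∑ j, ∑ k, A j k ^ 2 = (d:ℝ) := by
    have hAA : A * A = S := (sqrt_facts d S hS).1
    have h1 : (A * A).trace = ∑ j, ∑ k, A j k * A k j := by
      simp [Matrix.trace, Matrix.diag, Matrix.mul_apply]
    rw [← htr, ← hAA, h1]
    refine Finset.sum_congr rfl fun j _ => Finset.sum_congr rfl fun k _ => ?_
    rw [pow_two]
    exact congrArg (fun t => A j k * t) (hsym j k)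
  -- direction probability
  have hdir : ENNReal.ofReal (360/361) ≤
      (Measure.map U P) {u : ES d | ‖(Matrix.toEuclideanLin A) u‖ ≤ 19} :=
    sphere_markov (Measure.map U P) hdpos hsph hinv A hAsum
  -- per-sample probability
  set s19 : Set (ES d) := {x | ‖x‖ ≤ 19 * r} with hs19
  have hs19meas : MeasurableSet s19 :=
    (isClosed_le continuous_norm continuous_const).measurableSet
  have hsdir_meas : MeasurableSet {u : ES d | ‖(Matrix.toEuclideanLin A) u‖ ≤ 19} :=
    (isClosed_le (LinearMap.continuous_of_finiteDimensional _).norm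
      continuous_const).measurableSet
  have hell : ENNReal.ofReal (360/361 * α) ≤ P (ellSample A R U ⁻¹' s19) := by
    have hsubset : R ⁻¹' (Set.Iic (ρ * Real.sqrt d)) ∩
        U ⁻¹' {u : ES d | ‖(Matrix.toEuclideanLin A) u‖ ≤ 19} ⊆ ellSample A R U ⁻¹' s19 := by
      rintro ω ⟨h1, h2⟩
      simp only [Set.mem_preimage, Set.mem_Iic, Set.mem_setOf_eq] at h1 h2
      show ellSample A R U ω ∈ s19
      rw [hs19]
      simp only [Set.mem_setOf_eq, ellSample]
      rw [norm_smul, Real.norm_eq_abs, abs_of_pos (hRpos ω)]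
      calc R ω * ‖(Matrix.toEuclideanLin A) (U ω)‖ ≤ (ρ * Real.sqrt d) * 19 :=
            mul_le_mul h1 h2 (norm_nonneg _) (by positivity)
        _ = 19 * r := by rw [hrdef]; ring
    have hind := hRU.measure_inter_preimage_eq_mul
      (s := Set.Iic (ρ * Real.sqrt d))
      (t := {u : ES d | ‖(Matrix.toEuclideanLin A) u‖ ≤ 19}) measurableSet_Iic hsdir_meas
    have hU19 : ENNReal.ofReal (360/361) ≤
        P (U ⁻¹' {u : ES d | ‖(Matrix.toEuclideanLin A) u‖ ≤ 19}) := by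
      rwa [Measure.map_apply_of_aemeasurable hUae hsdir_meas] at hdir
    have hRIic : ENNReal.ofReal α ≤ P (R ⁻¹' Set.Iic (ρ * Real.sqrt d)) := hRprob
    calc ENNReal.ofReal (360/361 * α)
        = ENNReal.ofReal α * ENNReal.ofReal (360/361) := by
          rw [← ENNReal.ofReal_mul hα.1.le]; ring_nf
      _ ≤ P (R ⁻¹' Set.Iic (ρ * Real.sqrt d)) *
          P (U ⁻¹' {u : ES d | ‖(Matrix.toEuclideanLin A) u‖ ≤ 19}) :=
          mul_le_mul' hRIic hU19
      _ = P (R ⁻¹' (Set.Iic (ρ * Real.sqrt d)) ∩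
          U ⁻¹' {u : ES d | ‖(Matrix.toEuclideanLin A) u‖ ≤ 19}) := hind.symm
      _ ≤ P (ellSample A R U ⁻¹' s19) := measure_mono hsubset
  have hPi : ∀ i : Fin n, ENNReal.ofReal (360/361 * α) ≤ P (η i ⁻¹' s19) := fun i => by
    rw [(hηid i).measure_mem_eq hs19meas]; exact hell
  -- measurable modifications
  have hηae : ∀ i, AEMeasurable (η i) P := fun i => (hηid i).aemeasurable_fst
  set η' : Fin n → Ω → ES d := fun i => (hηae i).mk (η i) with hη'
  have hη'meas : ∀ i, Measurable (η' i) := fun i => (hηae i).measurable_mk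
  have hηeq : ∀ i, η i =ᵐ[P] η' i := fun i => (hηae i).ae_eq_mk
  have hη'indep : iIndepFun η' P :=
    iIndepFun_congr_ae hηindep hηeq
  -- indicators
  set g : ES d → ℝ := fun x => if ‖x‖ ≤ 19 * r then 1 else 0 with hg
  have hgmeas : Measurable g := Measurable.ite hs19meas measurable_const measurable_const
  set X : Fin n → Ω → ℝ := fun i => g ∘ η' i with hX
  have hXmeas : ∀ i, Measurable (X i) := fun i => hgmeas.comp (hη'meas i)
  have hXindep : iIndepFun X P :=
    hη'indep.comp _ (fun _ => hgmeas)
  have hXval : ∀ i ω, X i ω = 0 ∨ X i ω = 1 := by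
    intro i ω
    rw [hX]
    simp only [Function.comp_apply, hg]
    split_ifs
    · right; rfl
    · left; rfl
  have hXprob : ∀ i, ENNReal.ofReal (360/361 * α) ≤ P {ω | X i ω = 1} := by
    intro i
    have hseteq : {ω | X i ω = 1} = η' i ⁻¹' s19 := by
      ext ω
      rw [hX]
      simp only [Set.mem_setOf_eq, Function.comp_apply, hg, Set.mem_preimage, hs19]
      split_ifs with hcond
      · simp [hcond]
      · simp [hcond]
    have hcongr : P (η' i ⁻¹' s19) = P (η i ⁻¹' s19) := by
      refine measure_congr ?_
      filter_upwards [hηeq i] with ω hω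
      show (η' i ω ∈ s19) = (η i ω ∈ s19)
      rw [hω]
    rw [hseteq, hcongr]
    exact hPi i
  -- Chernoff bound
  have hchern := chernoff_binom P X hXmeas hXindep hXval
    (p := 360/361 * α) (mul_nonneg (by norm_num) hα.1.le) hXprob (53/100 * α)
  have hexp : Real.exp (53/100 * α * n - (1 - Real.exp (-1)) * (360/361 * α) * n) ≤
      Real.exp (-(1/100 * α * n)) := by
    apply Real.exp_le_exp.mpr
    have h27 : (2.7:ℝ) < Real.exp 1 := by
      have := Real.exp_one_gt_d9
      norm_num at this ⊢
      linarith
    have he : Real.exp (-1) ≤ 10/27 := by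
      rw [Real.exp_neg]
      have h1 : (Real.exp 1)⁻¹ ≤ (2.7:ℝ)⁻¹ := by
        apply inv_anti₀ (by norm_num) h27.le
      calc (Real.exp 1)⁻¹ ≤ (2.7:ℝ)⁻¹ := h1
        _ = 10/27 := by norm_num
    have hn0 : (0:ℝ) ≤ (n:ℝ) := Nat.cast_nonneg n
    have hq : (0:ℝ) ≤ α * n := mul_nonneg hα.1.le hn0
    nlinarith [mul_le_mul_of_nonneg_left he hq]
  set β : ℝ := 53/100 * α with hβ
  have hSmeas : Measurable (fun ω => ∑ i, X i ω) :=
    Finset.measurable_sum Finset.univ fun i _ => hXmeas i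
  have hTmeas : MeasurableSet {ω | ∑ i, X i ω ≤ β * n} :=
    measurableSet_le hSmeas measurable_const
  have hPtail : P {ω | ∑ i, X i ω ≤ β * n} ≤ ENNReal.ofReal (Real.exp (-(1/100 * α * n))) := by
    rw [ENNReal.le_ofReal_iff_toReal_le (measure_ne_top _ _) (Real.exp_pos _).le]
    exact hchern.trans hexp
  have hPT : ENNReal.ofReal (1 - Real.exp (-(1/100 * α * n))) ≤
      P {ω | β * n < ∑ i, X i ω} := by
    have hcompl : {ω | β * n < ∑ i, X i ω} = {ω | ∑ i, X i ω ≤ β * n}ᶜ := by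
      ext ω; simp [not_le]
    rw [hcompl, prob_compl_eq_one_sub hTmeas]
    calc ENNReal.ofReal (1 - Real.exp (-(1/100 * α * n)))
        = 1 - ENNReal.ofReal (Real.exp (-(1/100 * α * n))) := by
          rw [ENNReal.ofReal_sub _ (Real.exp_pos _).le, ENNReal.ofReal_one]
      _ ≤ 1 - P {ω | ∑ i, X i ω ≤ β * n} := tsub_le_tsub_left hPtail 1
  refine le_trans hPT ?_
  -- compare the good event with the target event
  have hT'null : P {ω | ∀ i, η i ω = η' i ω}ᶜ = 0 := by
    have hae : ∀ᵐ ω ∂P, ∀ i, η i ω = η' i ω := MeasureTheory.ae_all_iff.mpr hηeq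
    rw [Set.compl_setOf]
    exact MeasureTheory.ae_iff.mp hae
  refine le_trans (le_of_eq (measure_inter_conull hT'null).symm) (measure_mono ?_)
  rintro ω ⟨h1, h2⟩
  simp only [Set.mem_setOf_eq] at h1 h2 ⊢
  have hsum : ∑ i, X i ω =
      ((Finset.univ.filter (fun i => ‖η i ω‖ ≤ 19 * (ρ * Real.sqrt d))).card : ℝ) := by
    have hXi : ∀ i, X i ω = if ‖η i ω‖ ≤ 19 * (ρ * Real.sqrt d) then (1:ℝ) else 0 := by
      intro i
      rw [hX]
      simp only [Function.comp_apply, hg]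
      rw [← h2 i]
    rw [Finset.sum_congr rfl (fun i _ => hXi i)]
    rw [Finset.sum_boole]
  have hgood : 53/100 * α * (n:ℝ) <
      ((Finset.univ.filter (fun i => ‖η i ω‖ ≤ 19 * (ρ * Real.sqrt d))).card : ℝ) := by
    rw [← hsum]; exact h1
  exact det_core hρ hd1 hα.1 (by linarith) μstar (fun i => η i ω) hgood

end
end
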